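/- arXiv:2107.01317 — 8 statements merged into one kernel-verified Lean document; each statement's English description precedes it below -/
import Mathlib

section
/- Let n > 2 and 0 < q < n be coprime integers and let n/q = [b_1,…,b_s] be its Hirzebruch–Jung continued fraction expansion with all b_i ≥ 2. Let q' be the unique integer with 0 < q' < n and q·q' ≡ 1 (mod n), and let m be the integer with q·q' = 1 + m·n. Set N = 2q − m + 2n − q' and Q = 2q − m. Then 0 < Q < N, gcd(N, Q) = 1, and the sequence [b_1 + 1, b_2, …, b_s, 2] (all of whose entries are ≥ 2) is the Hirzebruch–Jung continued fraction expansion of N/Q. -/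
def hj : List ℤ → ℚ
  | [] => 0
  | [a] => (a : ℚ)
  | a :: l => (a : ℚ) - 1 / hj l

/-- `hjP L = (p, p', r, r')`, the entries of the product of the matrices
`!![a, -1; 1, 0]` over `a ∈ L`. -/
def hjP : List ℤ → ℤ × ℤ × ℤ × ℤ
  | [] => (1, 0, 0, 1)
  | a :: l => (a * (hjP l).1 - (hjP l).2.1, (hjP l).1,
               a * (hjP l).2.2.1 - (hjP l).2.2.2, (hjP l).2.2.1)

lemma hjP_det (L : List ℤ) :
    (hjP L).1 * (hjP L).2.2.2 - (hjP L).2.2.1 * (hjP L).2.1 = 1 := by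
  induction L with
  | nil => simp [hjP]
  | cons a l ih => simp only [hjP]; nlinarith [ih]

lemma hjP_append2 (L : List ℤ) :
    hjP (L ++ [2]) = (2 * (hjP L).1 + (hjP L).2.2.1, 2 * (hjP L).2.1 + (hjP L).2.2.2,
      -(hjP L).1, -(hjP L).2.1) := by
  induction L with
  | nil => simp [hjP]
  | cons a l ih =>
    have : (a :: l) ++ [2] = a :: (l ++ [2]) := rfl
    rw [this]
    simp only [hjP, ih]
    refine Prod.ext (by ring) (Prod.ext (by ring) (Prod.ext (by ring) (by ring)))

lemma hjP_inv (L : List ℤ) (hL : L ≠ []) (hb : ∀ b ∈ L, 2 ≤ b) :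
    1 ≤ (hjP L).2.1 ∧ (hjP L).2.1 < (hjP L).1 ∧ (hjP L).2.2.2 ≤ 0 ∧
    (hjP L).2.2.1 < (hjP L).2.2.2 ∧ 0 < (hjP L).1 + (hjP L).2.2.1 ∧
    0 < (hjP L).2.1 + (hjP L).2.2.2 ∧
    (hjP L).2.1 + (hjP L).2.2.2 ≤ (hjP L).1 + (hjP L).2.2.1 ∧
    hj L = ((hjP L).1 : ℚ) / ((hjP L).2.1 : ℚ) := by
  induction L with
  | nil => exact absurd rfl hL
  | cons a l ih =>
    have ha : 2 ≤ a := hb a (by simp)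
    cases l with
    | nil =>
      refine ⟨?_, ?_, ?_, ?_, ?_, ?_, ?_, ?_⟩ <;> simp [hjP, hj] <;> omega
    | cons b l' =>
      obtain ⟨h1, h2, h3, h4, h5, h6, h7, h8⟩ :=
        ih (by simp) (fun x hx => hb x (List.mem_cons_of_mem a hx))
      set p := (hjP (b :: l')).1 with hp
      set p' := (hjP (b :: l')).2.1
      set r := (hjP (b :: l')).2.2.1
      set r' := (hjP (b :: l')).2.2.2
      have hjcons : hj (a :: b :: l') = (a : ℚ) - 1 / hj (b :: l') := rfl
      have hP : hjP (a :: b :: l') = (a * p - p', p, a * r - r', r) := rfl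
      rw [hP]
      dsimp only
      have hp0 : (0:ℤ) < p := by linarith
      have h2p : 2 * p ≤ a * p := by nlinarith
      have h2r : a * r ≤ 2 * r := by nlinarith
      have h2pr : 2 * p + 2 * r ≤ a * p + a * r := by nlinarith
      have hpq : (p : ℚ) ≠ 0 := by exact_mod_cast hp0.ne'
      have hp'q : (p' : ℚ) ≠ 0 := by
        have : (0:ℤ) < p' := h1
        exact_mod_cast this.ne'
      refine ⟨by linarith, by linarith, by linarith, by linarith, by linarith,
        by linarith, by linarith, ?_⟩
      rw [hjcons, h8]
      field_simp
      push_cast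
      rfl

lemma hjP_coprime (L : List ℤ) : IsCoprime (hjP L).1 (hjP L).2.1 :=
  ⟨(hjP L).2.2.2, -(hjP L).2.2.1, by have := hjP_det L; ring_nf; ring_nf at this; linarith⟩

set_option maxHeartbeats 1000000 in
/-- Let `n > 2` and `0 < q < n` be coprime, let `n/q = [b₁,…,bₛ]` be its
Hirzebruch–Jung continued fraction expansion with all `bᵢ ≥ 2`, let `q'` be the
inverse of `q` mod `n` with `0 < q' < n`, and let `m` satisfy `q·q' = 1 + m·n`.
With `N = 2q − m + 2n − q'` and `Q = 2q − m`, we have `0 < Q < N`,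
`gcd(N,Q) = 1`, and `[b₁+1, b₂, …, bₛ, 2]` (all of whose entries are `≥ 2`) is
the Hirzebruch–Jung continued fraction expansion of `N/Q`. -/
theorem stmt0 (n q q' m : ℤ) (hn : 2 < n) (hq0 : 0 < q) (hqn : q < n)
    (hcop : IsCoprime q n)
    (hq'0 : 0 < q') (hq'n : q' < n) (hmod : n ∣ q * q' - 1)
    (hm : q * q' = 1 + m * n)
    (L : List ℤ) (hL : L ≠ []) (hb : ∀ b ∈ L, 2 ≤ b)
    (hval : hj L = (n : ℚ) / (q : ℚ)) :
    0 < 2 * q - m ∧ 2 * q - m < 2 * q - m + 2 * n - q' ∧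
      Int.gcd (2 * q - m + 2 * n - q') (2 * q - m) = 1 ∧
      (∀ x ∈ (L.headI + 1) :: (L.tail ++ [2]), 2 ≤ x) ∧
      hj ((L.headI + 1) :: (L.tail ++ [2])) =
        ((2 * q - m + 2 * n - q' : ℤ) : ℚ) / ((2 * q - m : ℤ) : ℚ) := by
  obtain ⟨h1, h2, h3, h4, h5, h6, h7, h8⟩ := hjP_inv L hL hb
  set p := (hjP L).1 with hp
  set p' := (hjP L).2.1 with hp'
  set r := (hjP L).2.2.1 with hr
  set r' := (hjP L).2.2.2 with hr'
  have hdet : p * r' - r * p' = 1 := hjP_det L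
  -- identify p = n, p' = q
  have hpp' : ((p : ℚ)) / p' = (n : ℚ) / q := h8.symm.trans hval
  have hp'q : ((p' : ℚ)) ≠ 0 := by
    have : (0:ℤ) < p' := h1
    exact_mod_cast this.ne'
  have hqq : ((q : ℚ)) ≠ 0 := by exact_mod_cast hq0.ne'
  rw [div_eq_div_iff hp'q hqq] at hpp'
  have hcross : p * q = n * p' := by exact_mod_cast hpp'
  have hpn : p = n := by
    refine Int.dvd_antisymm (by linarith) (by linarith) ?_ ?_
    · exact (hjP_coprime L).dvd_of_dvd_mul_right ⟨q, by linarith [hcross]⟩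
    · exact hcop.symm.dvd_of_dvd_mul_right ⟨p', by linarith [hcross]⟩
  have hp'q2 : p' = q := by
    have : n * p' = n * q := by nlinarith [hcross]
    exact mul_left_cancel₀ (show (n:ℤ) ≠ 0 by linarith) this
  -- identify r = -q', r' = -m
  have hdet' : n * r' - r * q = 1 := by rw [hpn, hp'q2] at hdet; exact hdet
  have hrq' : r = -q' := by
    have hd : n ∣ (-r) - q' := by
      refine hcop.symm.dvd_of_dvd_mul_left ⟨-r' - m, ?_⟩
      ring_nf
      nlinarith [hdet', hm]
    have hb1 : -r < n := by rw [← hpn]; linarith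
    have hb2 : 0 < -r := by linarith
    have h0 : -r - q' = 0 :=
      Int.eq_zero_of_abs_lt_dvd hd (by rw [abs_lt]; constructor <;> linarith)
    linarith
  have hr'm : r' = -m := by
    have hnn : n * r' = n * (-m) := by rw [hrq'] at hdet'; linarith [hm]
    exact mul_left_cancel₀ (show (n:ℤ) ≠ 0 by linarith) hnn
  -- decompose L
  obtain ⟨h₀, t, rfl⟩ := List.exists_cons_of_ne_nil hL
  have hhead : (h₀ :: t).headI = h₀ := rfl
  have htail : (h₀ :: t).tail = t := rfl
  rw [hhead, htail]
  -- components of hjP t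
  have hPc : hjP (h₀ :: t) = (h₀ * (hjP t).1 - (hjP t).2.1, (hjP t).1,
      h₀ * (hjP t).2.2.1 - (hjP t).2.2.2, (hjP t).2.2.1) := rfl
  have e1 : (hjP t).1 = q := by
    have h := congrArg (fun x => x.2.1) hPc
    dsimp only at h
    rw [← hp', hp'q2] at h
    exact h.symm
  have e2 : (hjP t).2.2.1 = -m := by
    have h := congrArg (fun x => x.2.2.2) hPc
    dsimp only at h
    rw [← hr', hr'm] at h
    exact h.symm
  have e3 : (hjP t).2.1 = h₀ * q - n := by
    have h := congrArg (fun x => x.1) hPc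
    dsimp only at h
    rw [← hp, hpn, e1] at h
    linarith
  have e4 : (hjP t).2.2.2 = -(h₀ * m) + q' := by
    have h := congrArg (fun x => x.2.2.1) hPc
    dsimp only at h
    rw [← hr, hrq', e2] at h
    linarith
  -- hjP of the new list
  have hA := hjP_append2 t
  have hnewP : hjP ((h₀ + 1) :: (t ++ [2])) =
      ((h₀+1) * (hjP (t ++ [2])).1 - (hjP (t ++ [2])).2.1, (hjP (t ++ [2])).1,
       (h₀+1) * (hjP (t ++ [2])).2.2.1 - (hjP (t ++ [2])).2.2.2, (hjP (t ++ [2])).2.2.1) := rfl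
  have hnum : (hjP ((h₀ + 1) :: (t ++ [2]))).1 = 2 * q - m + 2 * n - q' := by
    rw [hnewP]
    dsimp only
    rw [hA]
    dsimp only
    rw [e1, e2, e3, e4]
    ring
  have hden : (hjP ((h₀ + 1) :: (t ++ [2]))).2.1 = 2 * q - m := by
    rw [hnewP]
    dsimp only
    rw [hA]
    dsimp only
    rw [e1, e2]
    ring
  -- entries of the new list are ≥ 2
  have hb' : ∀ x ∈ (h₀ + 1) :: (t ++ [2]), 2 ≤ x := by
    intro x hx
    rcases List.mem_cons.1 hx with rfl | hx
    · have := hb h₀ (by simp); omega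
    · rcases List.mem_append.1 hx with hx | hx
      · exact hb x (List.mem_cons_of_mem _ hx)
      · simp at hx; omega
  obtain ⟨g1, g2, g3, g4, g5, g6, g7, g8⟩ :=
    hjP_inv ((h₀ + 1) :: (t ++ [2])) (by simp) hb'
  rw [hden] at g1
  rw [hnum, hden] at g2
  rw [hnum, hden] at g8
  refine ⟨g1, by linarith, ?_, hb', g8⟩
  have hcp := hjP_coprime ((h₀ + 1) :: (t ++ [2]))
  rw [hnum, hden] at hcp
  exact Int.isCoprime_iff_gcd_eq_one.1 hcp
end

section
/- Let n > 2 and 0 < q < n be coprime integers and let n/q = [b_1,…,b_s] be its Hirzebruch–Jung continued fraction expansion with all b_i ≥ 2. Let q' be the unique integer with 0 < q' < n and q·q' ≡ 1 (mod n), and let m be the integer with q·q' = 1 + m·n. Set N = 2q − m + 2n − q' and Q' = q + n. Then 0 < Q' < N, and the reversed sequence [2, b_s, …, b_2, b_1 + 1] is the Hirzebruch–Jung continued fraction expansion of N/Q'; equivalently, Q' = q + n is the multiplicative inverse of Q = 2q − m modulo N. -/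
/-- 2×2 integer matrix multiplication on 4-tuples `(p, r, q, s) = !![p, r; q, s]`. -/
def mul4 (x y : ℤ × ℤ × ℤ × ℤ) : ℤ × ℤ × ℤ × ℤ :=
  (x.1 * y.1 + x.2.1 * y.2.2.1, x.1 * y.2.1 + x.2.1 * y.2.2.2,
   x.2.2.1 * y.1 + x.2.2.2 * y.2.2.1, x.2.2.1 * y.2.1 + x.2.2.2 * y.2.2.2)

/-- The continuant matrix of a list. -/
def cm : List ℤ → ℤ × ℤ × ℤ × ℤ
  | [] => (1, 0, 0, 1)
  | a :: l => mul4 (a, -1, 1, 0) (cm l)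

lemma mul4_assoc (x y z : ℤ × ℤ × ℤ × ℤ) : mul4 (mul4 x y) z = mul4 x (mul4 y z) := by
  obtain ⟨a, b, c, d⟩ := x
  obtain ⟨e, f, g, h⟩ := y
  obtain ⟨i, j, k, l⟩ := z
  simp only [mul4, Prod.mk.injEq]
  refine ⟨by ring, by ring, by ring, by ring⟩

lemma mul4_one_left (x : ℤ × ℤ × ℤ × ℤ) : mul4 (1, 0, 0, 1) x = x := by
  obtain ⟨a, b, c, d⟩ := x
  simp only [mul4, Prod.mk.injEq]
  refine ⟨by ring, by ring, by ring, by ring⟩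

lemma cm_cons (a : ℤ) (l : List ℤ) : cm (a :: l) = mul4 (a, -1, 1, 0) (cm l) := rfl

lemma cm_append (l l' : List ℤ) : cm (l ++ l') = mul4 (cm l) (cm l') := by
  induction l with
  | nil => simp [cm, mul4_one_left]
  | cons a l ih =>
      rw [List.cons_append, cm_cons, ih, cm_cons, mul4_assoc]

lemma cm_det : ∀ l : List ℤ, (cm l).1 * (cm l).2.2.2 - (cm l).2.1 * (cm l).2.2.1 = 1
  | [] => by simp [cm]
  | a :: l => by
      have ih := cm_det l
      obtain ⟨p, r, q, s, hx⟩ : ∃ p r q s, cm l = (p, r, q, s) := ⟨_, _, _, _, rfl⟩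
      rw [hx] at ih
      rw [cm_cons, hx]
      simp only [mul4] at ih ⊢
      nlinarith [ih]

lemma cm_single (a : ℤ) : cm [a] = (a, -1, 1, 0) := by
  simp [cm, mul4]

lemma cm_reverse : ∀ l : List ℤ,
    cm l.reverse = ((cm l).1, -(cm l).2.2.1, -(cm l).2.1, (cm l).2.2.2)
  | [] => by simp [cm]
  | a :: l => by
      have ih := cm_reverse l
      obtain ⟨p, r, q, s, hx⟩ : ∃ p r q s, cm l = (p, r, q, s) := ⟨_, _, _, _, rfl⟩
      rw [hx] at ih
      rw [List.reverse_cons, cm_append, ih, cm_single, cm_cons, hx]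
      simp only [mul4, Prod.mk.injEq]
      refine ⟨by ring, by ring, by ring, by ring⟩

lemma hj_eq : ∀ l : List ℤ, l ≠ [] → (∀ b ∈ l, 2 ≤ b) →
    hj l = ((cm l).1 : ℚ) / ((cm l).2.2.1 : ℚ) ∧ 1 ≤ (cm l).2.2.1 ∧ (cm l).2.2.1 < (cm l).1
  | [], h, _ => absurd rfl h
  | [a], _, hb => by
      have ha : 2 ≤ a := hb a (by simp)
      rw [cm_single]
      refine ⟨by simp [hj], by norm_num, by simpa using by omega⟩
  | a :: b :: l, _, hb => by
      have ih := hj_eq (b :: l) (by simp) (fun x hx => hb x (List.mem_cons_of_mem a hx))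
      have ha : 2 ≤ a := hb a (by simp)
      obtain ⟨p, r, q, s, hx⟩ : ∃ p r q s, cm (b :: l) = (p, r, q, s) := ⟨_, _, _, _, rfl⟩
      rw [hx] at ih
      dsimp only at ih
      obtain ⟨ihv, ihq, ihpq⟩ := ih
      have hp1 : (2:ℤ) ≤ p := by omega
      have hp0 : (p : ℚ) ≠ 0 := by exact_mod_cast (by omega : p ≠ 0)
      have hq0 : (q : ℚ) ≠ 0 := by exact_mod_cast (by omega : q ≠ 0)
      have hcons : cm (a :: b :: l) = (a * p - q, a * r - s, p, r) := by
        rw [cm_cons, hx]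
        simp only [mul4, Prod.mk.injEq]
        refine ⟨by ring, by ring, by ring, by ring⟩
      rw [hcons]
      dsimp only
      have hhj : hj (a :: b :: l) = (a : ℚ) - 1 / hj (b :: l) := rfl
      refine ⟨?_, by omega, by nlinarith⟩
      rw [hhj, ihv]
      push_cast
      field_simp

/-- Let `n > 2` and `0 < q < n` be coprime, let `n/q = [b₁,…,bₛ]` be its
Hirzebruch–Jung continued fraction expansion with all `bᵢ ≥ 2`, let `q'` be the
inverse of `q` mod `n` with `0 < q' < n`, and let `m` satisfy `q·q' = 1 + m·n`.
With `N = 2q − m + 2n − q'` and `Q' = q + n`, we have `0 < Q' < N` and the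
reversed sequence `[2, bₛ, …, b₂, b₁+1]` is the Hirzebruch–Jung continued
fraction expansion of `N/Q'`; equivalently `Q' = q + n` is the multiplicative
inverse of `Q = 2q − m` modulo `N`. -/
theorem stmt1 (n q q' m : ℤ) (hn : 2 < n) (hq0 : 0 < q) (hqn : q < n)
    (hcop : IsCoprime q n)
    (hq'0 : 0 < q') (hq'n : q' < n) (hmod : n ∣ q * q' - 1)
    (hm : q * q' = 1 + m * n)
    (L : List ℤ) (hL : L ≠ []) (hb : ∀ b ∈ L, 2 ≤ b)
    (hval : hj L = (n : ℚ) / (q : ℚ)) :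
    0 < q + n ∧ q + n < 2 * q - m + 2 * n - q' ∧
      hj (2 :: (L.tail.reverse ++ [L.headI + 1])) =
        ((2 * q - m + 2 * n - q' : ℤ) : ℚ) / ((q + n : ℤ) : ℚ) ∧
      (2 * q - m + 2 * n - q') ∣ ((2 * q - m) * (q + n) - 1) := by
  obtain ⟨h, t, rfl⟩ : ∃ h t, L = h :: t := by
    cases L with
    | nil => exact absurd rfl hL
    | cons h t => exact ⟨h, t, rfl⟩
  obtain ⟨p, r, q₀, s, hx⟩ : ∃ p r q₀ s, cm (h :: t) = (p, r, q₀, s) := ⟨_, _, _, _, rfl⟩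
  have hje := hj_eq (h :: t) (by simp) hb
  rw [hx] at hje
  dsimp only at hje
  obtain ⟨hjv, hq₀1, hq₀p⟩ := hje
  have hdet := cm_det (h :: t)
  rw [hx] at hdet
  dsimp only at hdet
  -- facts about the reversed list
  have hrev := cm_reverse (h :: t)
  rw [hx] at hrev
  dsimp only at hrev
  have hjer := hj_eq (h :: t).reverse (by simp)
    (fun b hbm => hb b (List.mem_reverse.mp hbm))
  rw [hrev] at hjer
  dsimp only at hjer
  obtain ⟨-, hr1, hrp⟩ := hjer
  -- identify p = n and q₀ = q
  have hq₀Q : ((q₀ : ℚ)) ≠ 0 := by exact_mod_cast (by omega : q₀ ≠ 0)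
  have hqQ : ((q : ℚ)) ≠ 0 := by exact_mod_cast hq0.ne'
  have hcross : p * q = n * q₀ := by
    have h2 := hval
    rw [hjv, div_eq_div_iff hq₀Q hqQ] at h2
    exact_mod_cast h2
  have hcop_pq : IsCoprime p q₀ := ⟨s, -r, by linarith [hdet]⟩
  have hpn : p = n := by
    have h1 : n ∣ p := (hcop.symm).dvd_of_dvd_mul_right ⟨q₀, hcross⟩
    have h2 : p ∣ n := hcop_pq.dvd_of_dvd_mul_right ⟨q, hcross.symm⟩
    exact Int.dvd_antisymm (by omega) (by omega) h2 h1
  have hq₀q : q₀ = q := by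
    have h3 : n * q₀ = n * q := by rw [← hcross, hpn]
    exact (mul_left_cancel₀ (by omega : n ≠ 0) h3)
  -- identify r = -q'
  have hdetn : n * s - r * q = 1 := by rw [← hpn, ← hq₀q]; exact hdet
  obtain ⟨c, hc⟩ := hmod
  have hprod : (q' + r) * q = n * (c + s) := by linear_combination hc - hdetn
  have hdvd : n ∣ q' + r := (hcop.symm).dvd_of_dvd_mul_right ⟨c + s, hprod⟩
  have hrq' : r = -q' := by
    have habs : |q' + r| < n := abs_lt.mpr ⟨by omega, by omega⟩
    have h0 : q' + r = 0 := Int.eq_zero_of_abs_lt_dvd hdvd habs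
    omega
  -- identify s = -m
  have hsm : s = -m := by
    have h0 : n * (s + m) = 0 := by linear_combination hdetn - hm + q * hrq'
    rcases mul_eq_zero.mp h0 with h1 | h1
    · omega
    · omega
  -- bound m < q
  have hmq : m < q := by
    have h1 : q * q' < q * n := mul_lt_mul_of_pos_left hq'n hq0
    by_contra hcon
    push_neg at hcon
    have h2 : q * n ≤ m * n := mul_le_mul_of_nonneg_right hcon (by omega)
    linarith
  refine ⟨by omega, by omega, ?_, ⟨q, by linear_combination hm⟩⟩
  -- the continuant matrix of the reversed tail
  obtain ⟨e, f, g, k, hB⟩ : ∃ e f g k, cm t.reverse = (e, f, g, k) := ⟨_, _, _, _, rfl⟩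
  have hrel : mul4 (cm t.reverse) (h, -1, 1, 0) = (p, -q₀, -r, s) := by
    rw [← cm_single, ← cm_append, ← List.reverse_cons, hrev]
  rw [hB] at hrel
  simp only [mul4, Prod.mk.injEq] at hrel
  obtain ⟨he1, he2, he3, he4⟩ := hrel
  -- compute the continuant matrix of the target list
  have hT : cm (2 :: (t.reverse ++ [h + 1])) =
      (2 * p + 2 * q₀ + r + s, -2 * q₀ - s, p + q₀, -q₀) := by
    rw [cm_cons, cm_append, cm_single, hB]
    simp only [mul4, Prod.mk.injEq]
    refine ⟨by linear_combination 2 * he1 - 2 * he2 - he3 + he4,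
      by linear_combination 2 * he2 - he4,
      by linear_combination he1 - he2,
      by linear_combination he2⟩
  have hbT : ∀ b ∈ (2 : ℤ) :: (t.reverse ++ [h + 1]), 2 ≤ b := by
    intro b hbm
    rcases List.mem_cons.mp hbm with h1 | h1
    · omega
    rcases List.mem_append.mp h1 with h2 | h2
    · exact hb b (List.mem_cons_of_mem h (List.mem_reverse.mp h2))
    · have hh : 2 ≤ h := hb h (by simp)
      simp only [List.mem_singleton] at h2
      omega
  have hjT := hj_eq ((2 : ℤ) :: (t.reverse ++ [h + 1])) (by simp) hbT
  rw [hT] at hjT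
  dsimp only at hjT
  obtain ⟨hjTv, -, -⟩ := hjT
  simp only [List.tail_cons, List.headI_cons]
  rw [hjTv]
  have e1 : 2 * p + 2 * q₀ + r + s = 2 * q - m + 2 * n - q' := by omega
  have e2 : p + q₀ = q + n := by omega
  rw [e1, e2]
end

section
/- Let n > 2 and 0 < q < n be coprime integers, let q' be the unique integer with 0 < q' < n and q·q' ≡ 1 (mod n), and let m be the integer determined by q·q' = 1 + m·n. Set N = 2q − m + 2n − q', Q = 2q − m and Q' = q + n. If 2 + q + q' < n, then (2 + q + q')/n < (2 + Q + Q')/N; equivalently, (2(N − 1) − Q − Q')/N < (2(n − 1) − q − q')/n. -/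
/-- Let `n > 2` and `0 < q < n` be coprime integers, let `q'` be the unique
integer with `0 < q' < n` and `q·q' ≡ 1 (mod n)`, and let `m` be the integer
determined by `q·q' = 1 + m·n`. Set `N = 2q − m + 2n − q'`, `Q = 2q − m` and
`Q' = q + n`. If `2 + q + q' < n`, then `(2 + q + q')/n < (2 + Q + Q')/N`;
equivalently `(2(N − 1) − Q − Q')/N < (2(n − 1) − q − q')/n`. -/
theorem stmt6 (n q q' m : ℤ) (hn : 2 < n) (hq0 : 0 < q) (hqn : q < n)
    (hcop : IsCoprime q n)
    (hq'0 : 0 < q') (hq'n : q' < n) (hmod : n ∣ q * q' - 1)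
    (hm : q * q' = 1 + m * n)
    (hlt : 2 + q + q' < n) :
    ((2 + q + q' : ℤ) : ℚ) / (n : ℚ) <
        ((2 + (2 * q - m) + (q + n) : ℤ) : ℚ) / ((2 * q - m + 2 * n - q' : ℤ) : ℚ) ∧
      ((2 * ((2 * q - m + 2 * n - q') - 1) - (2 * q - m) - (q + n) : ℤ) : ℚ) /
          ((2 * q - m + 2 * n - q' : ℤ) : ℚ) <
        ((2 * (n - 1) - q - q' : ℤ) : ℚ) / (n : ℚ) := by
  have hm0 : 0 ≤ m := by nlinarith [mul_pos hq0 hq'0]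
  have hmq : m < q := by nlinarith [mul_lt_mul_of_pos_left hq'n hq0]
  have hN : 0 < 2 * q - m + 2 * n - q' := by linarith
  have hnQ : (0 : ℚ) < (n : ℚ) := by exact_mod_cast (by linarith : (0:ℤ) < n)
  have hNQ : (0 : ℚ) < ((2 * q - m + 2 * n - q' : ℤ) : ℚ) := by exact_mod_cast hN
  have key : (2 + q + q') * (2 * q - m + 2 * n - q') < (2 + (2 * q - m) + (q + n)) * n := by
    nlinarith [hm, hm0, hlt, sq_nonneg (n - q - q'), mul_nonneg hm0 (by linarith : (0:ℤ) ≤ 2 + q + q')]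
  constructor
  · rw [div_lt_div_iff₀ hnQ hNQ]
    exact_mod_cast key
  · rw [div_lt_div_iff₀ hNQ hnQ]
    have : (2 * ((2 * q - m + 2 * n - q') - 1) - (2 * q - m) - (q + n)) * n
        < (2 * (n - 1) - q - q') * (2 * q - m + 2 * n - q') := by nlinarith [key]
    exact_mod_cast this
end

section
/- Let 0 < a < n be coprime integers, and let n/a = [x_1,…,x_f] and n/(n−a) = [y_1,…,y_g] be the Hirzebruch–Jung continued fraction expansions with all entries ≥ 2. Then for the sequence (a_1,…,a_{f+g+1}) := (x_1,…,x_f, 1, y_g,…,y_1), the numerator sequence defined by P_{−1} = 0, P_0 = 1, P_{i+1} = a_{i+1}·P_i − P_{i−1} satisfies P_{f+g+1} = 0; that is, the continued fraction [x_1,…,x_f, 1, y_g,…,y_1] equals 0. -/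
/-- The numerator sequence of a sequence `a`: `Pseq a (i+1)` is the number
`P_i` determined by `P_{-1} = 0`, `P_0 = 1` and `P_{i+1} = a_{i+1}·P_i − P_{i−1}`,
where `a k` denotes `a_{k+1}` (0-indexed access). -/
def Pseq (a : ℕ → ℤ) : ℕ → ℤ
  | 0 => 0
  | 1 => 1
  | (k + 2) => a k * Pseq a (k + 1) - Pseq a k

namespace HJaux

def M2 (a : ℤ) : Matrix (Fin 2) (Fin 2) ℤ := !![a, -1; 1, 0]

def Phi (l : List ℤ) : Matrix (Fin 2) (Fin 2) ℤ := (l.map M2).prod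

lemma Phi_nil : Phi [] = 1 := rfl

lemma Phi_cons (a : ℤ) (l : List ℤ) : Phi (a :: l) = M2 a * Phi l := by
  simp [Phi]

lemma Phi_append (l m : List ℤ) : Phi (l ++ m) = Phi l * Phi m := by
  simp [Phi]

lemma Phi_cons00 (a : ℤ) (l : List ℤ) :
    Phi (a :: l) 0 0 = a * Phi l 0 0 - Phi l 1 0 := by
  simp [Phi_cons, M2, Matrix.mul_apply, Fin.sum_univ_two]; ring

lemma Phi_cons01 (a : ℤ) (l : List ℤ) :
    Phi (a :: l) 0 1 = a * Phi l 0 1 - Phi l 1 1 := by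
  simp [Phi_cons, M2, Matrix.mul_apply, Fin.sum_univ_two]; ring

lemma Phi_cons10 (a : ℤ) (l : List ℤ) :
    Phi (a :: l) 1 0 = Phi l 0 0 := by
  simp [Phi_cons, M2, Matrix.mul_apply, Fin.sum_univ_two]

lemma Phi_cons11 (a : ℤ) (l : List ℤ) :
    Phi (a :: l) 1 1 = Phi l 0 1 := by
  simp [Phi_cons, M2, Matrix.mul_apply, Fin.sum_univ_two]

lemma Phi_det' (l : List ℤ) :
    Phi l 0 0 * Phi l 1 1 - Phi l 0 1 * Phi l 1 0 = 1 := by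
  have h : (Phi l).det = 1 := by
    induction l with
    | nil => simp [Phi_nil]
    | cons a l ih =>
        rw [Phi_cons, Matrix.det_mul, ih, mul_one]
        simp [M2, Matrix.det_fin_two_of]
  rwa [Matrix.det_fin_two] at h

lemma Phi_reverse (l : List ℤ) :
    Phi l.reverse = !![Phi l 0 0, -(Phi l 1 0); -(Phi l 0 1), Phi l 1 1] := by
  induction l with
  | nil =>
      rw [List.reverse_nil, Phi_nil]
      ext i j
      fin_cases i <;> fin_cases j <;> simp [Phi_nil, Matrix.one_apply]
  | cons a l ih =>
      have h : (a :: l).reverse = l.reverse ++ [a] := by simp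
      rw [h, Phi_append, ih]
      have h1 : Phi [a] = M2 a := by simp [Phi]
      rw [h1]
      ext i j
      fin_cases i <;> fin_cases j <;>
        simp [M2, Matrix.mul_apply, Fin.sum_univ_two,
          Phi_cons00, Phi_cons01, Phi_cons10, Phi_cons11] <;> ring

lemma Kgrow : ∀ l : List ℤ, (∀ x ∈ l, 2 ≤ x) →
    0 ≤ Phi l 1 0 ∧ Phi l 1 0 < Phi l 0 0 := by
  intro l
  induction l with
  | nil =>
      intro _
      constructor <;> simp [Phi_nil, Matrix.one_apply]
  | cons a l ih =>
      intro h2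
      obtain ⟨h0, h1⟩ := ih (fun x hx => h2 x (by simp [hx]))
      have ha : 2 ≤ a := h2 a (by simp)
      rw [Phi_cons10, Phi_cons00]
      constructor
      · linarith
      · nlinarith

lemma Tpos (l : List ℤ) (hl : l ≠ []) (h2 : ∀ x ∈ l, 2 ≤ x) :
    0 < Phi l 1 0 := by
  match l with
  | a :: l' =>
      rw [Phi_cons10]
      obtain ⟨h0, h1⟩ := Kgrow l' (fun x hx => h2 x (by simp [hx]))
      exact lt_of_le_of_lt h0 h1

lemma hj_eq : ∀ l : List ℤ, l ≠ [] → (∀ x ∈ l, 2 ≤ x) →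
    hj l = (Phi l 0 0 : ℚ) / (Phi l 1 0 : ℚ) := by
  intro l
  induction l with
  | nil => intro h; exact absurd rfl h
  | cons a l ih =>
      intro _ h2
      match l, ih with
      | [], _ =>
          simp [hj, Phi_cons00, Phi_cons10, Phi_nil, Matrix.one_apply]
      | b :: l', ih =>
          have h2' : ∀ x ∈ b :: l', 2 ≤ x := fun x hx => h2 x (by simp [hx])
          have hrec : hj (a :: b :: l') = (a : ℚ) - 1 / hj (b :: l') := rfl
          obtain ⟨g0, g1⟩ := Kgrow (b :: l') h2'
          have k0 : (0:ℤ) < Phi (b :: l') 0 0 := lt_of_le_of_lt g0 g1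
          have t0 : (0:ℤ) < Phi (b :: l') 1 0 := Tpos _ (by simp) h2'
          have hK : ((Phi (b :: l') 0 0 : ℤ) : ℚ) ≠ 0 := by exact_mod_cast k0.ne'
          have hT : ((Phi (b :: l') 1 0 : ℤ) : ℚ) ≠ 0 := by exact_mod_cast t0.ne'
          rw [hrec, ih (by simp) h2', Phi_cons00 a (b :: l'), Phi_cons10 a (b :: l')]
          push_cast
          rw [one_div_div]
          field_simp

lemma coprimeKT (l : List ℤ) : IsCoprime (Phi l 0 0) (Phi l 1 0) :=
  ⟨Phi l 1 1, -(Phi l 0 1), by have := Phi_det' l; ring_nf; linarith⟩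

/-- Pin down numerator and denominator from the value of the continued fraction. -/
lemma pin (n q : ℤ) (hq : 0 < q) (hn : q < n) (hc : IsCoprime q n)
    (l : List ℤ) (hl : l ≠ []) (h2 : ∀ x ∈ l, 2 ≤ x)
    (hv : hj l = (n : ℚ) / (q : ℚ)) :
    Phi l 0 0 = n ∧ Phi l 1 0 = q := by
  have t0 : 0 < Phi l 1 0 := Tpos l hl h2
  have k0 : 0 < Phi l 0 0 := lt_of_le_of_lt (Kgrow l h2).1 (Kgrow l h2).2
  have hn0 : (0:ℤ) < n := lt_trans hq hn
  have hEq := (hj_eq l hl h2).symm.trans hv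
  have hT : ((Phi l 1 0 : ℤ) : ℚ) ≠ 0 := by exact_mod_cast t0.ne'
  have hQ : ((q : ℤ) : ℚ) ≠ 0 := by exact_mod_cast hq.ne'
  rw [div_eq_div_iff hT hQ] at hEq
  have hcross : Phi l 0 0 * q = n * Phi l 1 0 := by exact_mod_cast hEq
  have hd1 : Phi l 0 0 ∣ n := by
    have : Phi l 0 0 ∣ n * Phi l 1 0 := ⟨q, by linarith⟩
    exact (coprimeKT l).dvd_of_dvd_mul_right this
  have hd2 : n ∣ Phi l 0 0 := by
    have : n ∣ Phi l 0 0 * q := ⟨Phi l 1 0, by linarith⟩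
    exact hc.symm.dvd_of_dvd_mul_right this
  have hKn : Phi l 0 0 = n := Int.dvd_antisymm k0.le hn0.le hd1 hd2
  refine ⟨hKn, ?_⟩
  have h' : n * q = n * Phi l 1 0 := by nth_rewrite 1 [← hKn]; exact hcross
  exact (mul_left_cancel₀ hn0.ne' h').symm


lemma Pseq_take (L : List ℤ) : ∀ m, m ≤ L.length →
    Phi (L.take m) 0 0 = Pseq (fun k => L.getD k 1) (m + 1) ∧
    Phi (L.take m) 0 1 = -(Pseq (fun k => L.getD k 1) m) := by
  intro m
  induction m with
  | zero =>
      intro _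
      simp [Pseq, Phi_nil, Matrix.one_apply]
  | succ m ih =>
      intro hm
      have hm' : m < L.length := hm
      obtain ⟨ih0, ih1⟩ := ih (le_of_lt hm')
      have htake : L.take (m + 1) = L.take m ++ [L[m]] := by
        rw [List.take_succ, List.getElem?_eq_getElem hm']
        rfl
      have hget : L.getD m 1 = L[m] := List.getD_eq_getElem L 1 hm'
      have h1 : Phi [L[m]] = M2 (L[m]) := by simp [Phi]
      rw [htake, Phi_append, h1]
      constructor
      · rw [Matrix.mul_apply, Fin.sum_univ_two]
        simp only [M2, Matrix.cons_val_zero, Matrix.cons_val_one, Matrix.head_cons,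
          Matrix.of_apply, Matrix.cons_val', Matrix.empty_val', Matrix.head_fin_const]
        rw [ih0, ih1, show Pseq (fun k => L.getD k 1) (m + 1 + 1) =
          L.getD m 1 * Pseq (fun k => L.getD k 1) (m + 1) - Pseq (fun k => L.getD k 1) m from rfl,
          hget]
        ring
      · rw [Matrix.mul_apply, Fin.sum_univ_two]
        simp only [M2, Matrix.cons_val_zero, Matrix.cons_val_one, Matrix.head_cons,
          Matrix.of_apply, Matrix.cons_val', Matrix.empty_val', Matrix.head_fin_const]
        rw [ih0]
        ring

end HJaux

open HJaux

/-- Let `0 < a < n` be coprime, and let `n/a = [x₁,…,x_f]` and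
`n/(n−a) = [y₁,…,y_g]` be the Hirzebruch–Jung continued fraction expansions
with all entries `≥ 2`. Then for the sequence `(x₁,…,x_f, 1, y_g,…,y₁)` of
length `f+g+1`, the numerator sequence satisfies `P_{f+g+1} = 0`; i.e. the
continued fraction `[x₁,…,x_f, 1, y_g,…,y₁]` equals `0`. -/
theorem stmt7 (n a : ℤ) (ha0 : 0 < a) (han : a < n) (hcop : IsCoprime a n)
    (X Y : List ℤ) (hX : X ≠ []) (hY : Y ≠ [])
    (hX2 : ∀ x ∈ X, 2 ≤ x) (hY2 : ∀ y ∈ Y, 2 ≤ y)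
    (hXval : hj X = (n : ℚ) / (a : ℚ))
    (hYval : hj Y = (n : ℚ) / ((n - a : ℤ) : ℚ)) :
    Pseq (fun k => (X ++ 1 :: Y.reverse).getD k 1) (X.length + Y.length + 2) = 0 := by
  set L : List ℤ := X ++ 1 :: Y.reverse with hLdef
  have hlen : L.length = X.length + Y.length + 1 := by simp [hLdef]; omega
  -- reduce to Phi L 0 0 = 0
  have hred := (Pseq_take L L.length (le_refl _)).1
  rw [List.take_length] at hred
  have hidx : X.length + Y.length + 2 = L.length + 1 := by omega
  rw [hidx, ← hred]
  -- pin down X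
  have hn0 : (0:ℤ) < n := lt_trans ha0 han
  obtain ⟨hX00, hX10⟩ := pin n a ha0 han hcop X hX hX2 hXval
  -- coprimality for n - a
  have hcop' : IsCoprime (n - a) n := by
    have h := hcop.neg_left.add_mul_left_left 1
    have : -a + n * 1 = n - a := by ring
    rwa [this] at h
  obtain ⟨hY00, hY10⟩ := pin n (n - a) (by linarith) (by linarith) hcop' Y hY hY2
    (by rw [hYval])
  -- the two determinant identities
  have detX := Phi_det' X
  have detY := Phi_det' Y
  rw [hX00, hX10] at detX
  rw [hY00, hY10] at detY
  -- bounds on the 0 1 entries via reversal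
  have hrX := Kgrow X.reverse (by intro x hx; exact hX2 x (List.mem_reverse.mp hx))
  have hrY := Kgrow Y.reverse (by intro y hy; exact hY2 y (List.mem_reverse.mp hy))
  rw [Phi_reverse X] at hrX
  rw [Phi_reverse Y] at hrY
  simp only [Matrix.cons_val_zero, Matrix.cons_val_one, Matrix.head_cons,
    Matrix.of_apply, Matrix.cons_val', Matrix.empty_val', Matrix.head_fin_const] at hrX hrY
  rw [hX00] at hrX
  rw [hY00] at hrY
  obtain ⟨hX01a, hX01b⟩ := hrX
  obtain ⟨hY01a, hY01b⟩ := hrY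
  -- n divides the sum of the duals
  have hsum : a * (-(Phi X 0 1) + -(Phi Y 0 1)) =
      n * (-(Phi X 1 1) + (-(Phi Y 0 1)) + Phi Y 1 1) := by ring_nf; ring_nf at detX detY; linarith
  have hdvd : n ∣ (-(Phi X 0 1) + -(Phi Y 0 1)) := by
    have h1 : n ∣ a * (-(Phi X 0 1) + -(Phi Y 0 1)) := ⟨_, hsum⟩
    exact hcop.symm.dvd_of_dvd_mul_left h1
  obtain ⟨c, hc⟩ := hdvd
  have hn2 : 2 ≤ n := by linarith
  have hc0 : 0 ≤ c := by nlinarith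
  have hc2 : c < 2 := by nlinarith
  have hcval : c = 1 := by
    rcases (by omega : c = 0 ∨ c = 1) with h | h
    · exfalso
      rw [h, mul_zero] at hc
      have hx0 : -(Phi X 0 1) = 0 := by linarith
      have hdvd1 : n ∣ 1 := ⟨Phi X 1 1, by nlinarith⟩
      have := Int.le_of_dvd one_pos hdvd1
      omega
    · exact h
  rw [hcval, mul_one] at hc
  -- final computation
  have hfin : Phi L 0 0 =
      (Phi X 0 0 + Phi X 0 1) * Phi Y 0 0 + Phi X 0 0 * Phi Y 0 1 := by
    rw [hLdef, Phi_append, Phi_cons, Phi_reverse]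
    simp only [M2, Matrix.mul_apply, Fin.sum_univ_two, Matrix.cons_val_zero,
      Matrix.cons_val_one, Matrix.head_cons, Matrix.of_apply, Matrix.cons_val',
      Matrix.empty_val', Matrix.head_fin_const]
    ring
  rw [hfin, hX00, hY00]
  nlinarith [hc]
end

section
/- Every core is admissible for chains; that is, if [e_1,…,e_s] is a sequence of integers with all e_i ≥ 2 and either s = 1 and e_1 ≥ 4, or s ≥ 2 and e_1 ≥ 3 and e_s ≥ 3, then for every k ≥ 0 the sequence consisting of k+1 consecutive copies of (e_1,…,e_s) separated by k single entries equal to 1 is admissible. -/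
/-- A finite sequence `a₁,…,aₛ` is admissible if `P_i > 0` for `i = 0,…,s−1`. -/
def Admissible (L : List ℤ) : Prop :=
  ∀ i < L.length, 0 < Pseq (fun k => L.getD k 1) (i + 1)

/-- `chainSeq L k` consists of `k+1` consecutive copies of `L` separated by
`k` single entries equal to `1`. -/
def chainSeq (L : List ℤ) : ℕ → List ℤ
  | 0 => L
  | (k + 1) => chainSeq L k ++ 1 :: L

lemma Pseq_congr (a b : ℕ → ℤ) : ∀ n, (∀ k, k + 2 ≤ n → a k = b k) → Pseq a n = Pseq b n := by
  intro n
  induction n using Nat.strong_induction_on with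
  | _ n ih =>
    match n with
    | 0 => intro _; rfl
    | 1 => intro _; rfl
    | (k+2) =>
      intro h
      show a k * Pseq a (k + 1) - Pseq a k = b k * Pseq b (k + 1) - Pseq b k
      rw [h k le_rfl, ih (k+1) (by omega) (fun j hj => h j (by omega)),
        ih k (by omega) (fun j hj => h j (by omega))]

lemma chainSeq_length (E : List ℤ) : ∀ k, (chainSeq E k).length + 1 = (k+1) * (E.length + 1)
  | 0 => by simp [chainSeq]
  | (k+1) => by
    have ih := chainSeq_length E k
    have : (k+1+1) * (E.length + 1) = (k+1) * (E.length + 1) + (E.length + 1) := by ring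
    simp only [chainSeq, List.length_append, List.length_cons]
    omega

lemma getD_last (l : List ℤ) (h : l ≠ []) : l.getD (l.length - 1) 1 = l.getLast! := by
  have hl : l.length - 1 < l.length := by cases l <;> simp_all
  rw [List.getD_eq_getElem l 1 hl, List.getLast!_eq_getElem!, getElem!_pos l _ hl]

lemma chainSeq_getD (E : List ℤ) : ∀ k n, n < (chainSeq E k).length →
    (chainSeq E k).getD n 1 = E.getD (n % (E.length + 1)) 1 := by
  intro k
  induction k with
  | zero =>
    intro n hn
    simp only [chainSeq] at hn ⊢
    rw [Nat.mod_eq_of_lt (by omega)]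
  | succ k ih =>
    intro n hn
    have hlen := chainSeq_length E k
    simp only [chainSeq, List.length_append, List.length_cons] at hn ⊢
    set L := (chainSeq E k).length with hL
    rcases Nat.lt_or_ge n L with h | h
    · rw [List.getD_append _ _ _ _ h, ih n h]
    · rw [List.getD_append_right _ _ _ _ h]
      rcases Nat.eq_or_lt_of_le h with h0 | h0
      · -- the separating 1; n ≡ E.length mod (E.length+1)
        have hmod : n % (E.length + 1) = E.length := by
          have hmul : (k+1) * (E.length+1) = E.length + k * (E.length + 1) + 1 := by ring
          have : n = E.length + k * (E.length + 1) := by omega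
          rw [this, Nat.add_mul_mod_self_right, Nat.mod_eq_of_lt (by omega)]
        rw [hmod, List.getD_eq_default _ _ (le_refl _)]
        have hnL : n - L = 0 := by omega
        rw [hnL]
        rfl
      · obtain ⟨d, hd⟩ : ∃ d, n - L = d + 1 := ⟨n - L - 1, by omega⟩
        have hmod : n % (E.length + 1) = d := by
          have hn' : n = d + (k + 1) * (E.length + 1) := by omega
          rw [hn', Nat.add_mul_mod_self_right, Nat.mod_eq_of_lt (by omega)]
        rw [hmod, hd]
        simp only [List.getD_cons_succ]

/-- Every core is admissible for chains: if `[e₁,…,eₛ]` is a sequence of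
integers with all `eᵢ ≥ 2` and either `s = 1` and `e₁ ≥ 4`, or `s ≥ 2`,
`e₁ ≥ 3` and `eₛ ≥ 3`, then for every `k ≥ 0` the sequence consisting of
`k+1` consecutive copies of `(e₁,…,eₛ)` separated by `k` single entries equal
to `1` is admissible. -/
theorem stmt8 (E : List ℤ) (h2 : ∀ e ∈ E, 2 ≤ e)
    (hcore : (E.length = 1 ∧ 4 ≤ E.headI) ∨
      (2 ≤ E.length ∧ 3 ≤ E.headI ∧ 3 ≤ E.getLast!)) :
    ∀ k : ℕ, Admissible (chainSeq E k) := by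
  set s := E.length with hsdef
  have hs : 1 ≤ s := by rcases hcore with ⟨h1,_⟩|⟨h1,_⟩ <;> omega
  have hne : E ≠ [] := List.ne_nil_of_length_pos (by omega)
  set a : ℕ → ℤ := fun n => E.getD (n % (s+1)) 1 with ha
  -- head and last entries
  have hhead : E.getD 0 1 = E.headI := by
    cases E with
    | nil => simp_all
    | cons x t => simp [List.headI]
  have hlast : E.getD (s - 1) 1 = E.getLast! := getD_last E hne
  have hmem : ∀ r < s, 2 ≤ E.getD r 1 := by
    intro r hr
    rw [List.getD_eq_getElem E 1 hr]
    exact h2 _ (List.getElem_mem hr)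
  -- the key invariant
  have key : ∀ i,
      (i % (s+1) = 0 → 0 ≤ Pseq a i ∧ Pseq a i < 2 * Pseq a (i+1) ∧ 0 < Pseq a (i+1)) ∧
      (i % (s+1) = s → 0 < Pseq a i ∧ 2 * Pseq a i < Pseq a (i+1)) ∧
      (i % (s+1) ≠ 0 → i % (s+1) ≠ s → 0 < Pseq a i ∧ Pseq a i < Pseq a (i+1)) := by
    intro i
    induction i with
    | zero =>
      refine ⟨fun _ => ?_, fun h => ?_, fun h _ => ?_⟩
      · show (0:ℤ) ≤ 0 ∧ (0:ℤ) < 2 * 1 ∧ (0:ℤ) < 1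
        norm_num
      · simp at h; omega
      · simp at h
    | succ i ih =>
      have hrlt : i % (s+1) < s + 1 := Nat.mod_lt _ (by omega)
      have hPrec : Pseq a (i+2) = a i * Pseq a (i+1) - Pseq a i := rfl
      have hai : a i = E.getD (i % (s+1)) 1 := rfl
      set r := i % (s+1) with hr
      have hsucc : (i+1) % (s+1) = if r = s then 0 else r + 1 := by
        rw [Nat.add_mod, ← hr, Nat.mod_eq_of_lt (show 1 < s + 1 by omega)]
        split
        · next h => rw [h]; simp
        · next h => exact Nat.mod_eq_of_lt (by omega)
      by_cases hrs : r = s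
      · -- crossing a separating 1
        rw [hrs] at hai
        have h1 : a i = 1 := by
          rw [hai, List.getD_eq_default _ _ (le_refl _)]
        obtain ⟨hp, hc⟩ := ih.2.1 hrs
        rw [hsucc, if_pos hrs]
        refine ⟨fun _ => ?_, fun h => by omega, fun h _ => absurd rfl h⟩
        rw [hPrec, h1]
        constructor
        · linarith
        constructor <;> linarith
      · -- inside a copy of E
        have hrlt' : r < s := by omega
        have he2 : 2 ≤ E.getD r 1 := hmem r hrlt'
        rw [hsucc, if_neg hrs]
        have hr1 : r + 1 ≠ 0 := by omega
        by_cases hr0 : r = 0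
        · -- first entry of a copy: state S3 holds
          obtain ⟨hp0, hp2, hc0⟩ := ih.1 hr0
          rw [hr0] at hai
          rw [hhead] at hai
          rcases hcore with ⟨hs1, he⟩ | ⟨hs2, he, _⟩
          · -- s = 1 : go directly to end-of-block state
            have : r + 1 = s := by omega
            refine ⟨fun h => by omega, fun _ => ?_, fun _ h => by omega⟩
            rw [hPrec]
            constructor
            · exact hc0
            · rw [hai]; nlinarith
          · -- s ≥ 2 : mid-block state
            have hr1s : r + 1 ≠ s := by omega
            refine ⟨fun h => by omega, fun h => by omega, fun _ _ => ?_⟩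
            rw [hPrec]
            constructor
            · exact hc0
            · rw [hai]; nlinarith
        · -- middle entry: state S1 holds
          obtain ⟨hp0, hpc⟩ := ih.2.2 hr0 hrs
          by_cases hr1s : r + 1 = s
          · -- last entry of a copy, e_s ≥ 3
            have hs2 : 2 ≤ s := by omega
            have he3 : 3 ≤ E.getD r 1 := by
              have : r = s - 1 := by omega
              rw [this, hlast]
              rcases hcore with ⟨hs1, _⟩ | ⟨_, _, hl⟩
              · omega
              · exact hl
            refine ⟨fun h => by omega, fun _ => ?_, fun _ h => by omega⟩
            rw [hPrec, hai]
            have hc0 : 0 < Pseq a (i+1) := by linarith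
            constructor
            · exact hc0
            · nlinarith
          · refine ⟨fun h => by omega, fun h => by omega, fun _ _ => ?_⟩
            rw [hPrec, hai]
            have hc0 : 0 < Pseq a (i+1) := by linarith
            constructor
            · exact hc0
            · nlinarith
  -- positivity of all Pseq a (i+1)
  have pos : ∀ i, 0 < Pseq a (i+1) := by
    intro i
    obtain ⟨k1, k2, k3⟩ := key i
    by_cases h0 : i % (s+1) = 0
    · exact (k1 h0).2.2
    by_cases hs' : i % (s+1) = s
    · have := k2 hs'; linarith
    · have := k3 h0 hs'; linarith
  intro k i hi
  have hagree : ∀ j, j + 2 ≤ i + 1 → (chainSeq E k).getD j 1 = a j := by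
    intro j hj
    exact chainSeq_getD E k j (by omega)
  rw [Pseq_congr _ a (i+1) hagree]
  exact pos i
end

section
/- Let [b_1,…,b_r] be a sequence of integers, all ≥ 2, that is admissible for chains. Then there exists a unique core [e_1,…,e_s] such that [b_1,…,b_r] is obtained from [e_1,…,e_s] by finitely many (possibly zero) T-chain algorithm steps. -/
/-- A core is a finite sequence `[e₁,…,eₛ]` of integers with all `eᵢ ≥ 2` such
that either `s = 1` and `e₁ ≥ 4`, or `s ≥ 2`, `e₁ ≥ 3` and `eₛ ≥ 3`. -/
def IsCore (E : List ℤ) : Prop :=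
  (∀ e ∈ E, 2 ≤ e) ∧
    ((E.length = 1 ∧ 4 ≤ E.headI) ∨ (2 ≤ E.length ∧ 3 ≤ E.headI ∧ 3 ≤ E.getLast!))

/-- A T-chain algorithm step transforms `[a₁,…,aₛ]` into either
`[2, a₁, …, a_{s−1}, aₛ + 1]` or `[a₁ + 1, a₂, …, aₛ, 2]`. -/
inductive TStep : List ℤ → List ℤ → Prop
  | left  (L : List ℤ) (h : L ≠ []) : TStep L (2 :: (L.dropLast ++ [L.getLast h + 1]))
  | right (L : List ℤ) (h : L ≠ []) : TStep L ((L.headI + 1) :: (L.tail ++ [2]))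

/-- `TStepIter k L L'` means `L'` is obtained from `L` by `k` T-chain
algorithm steps. -/
def TStepIter : ℕ → List ℤ → List ℤ → Prop
  | 0 => fun L L' => L = L'
  | (k + 1) => fun L L' => ∃ M, TStep L M ∧ TStepIter k M L'

namespace S9

/-- two-step induction -/
theorem two_step {P : ℕ → Prop} (h0 : P 0) (h1 : P 1)
    (h : ∀ n, P n → P (n + 1) → P (n + 2)) : ∀ n, P n := by
  have key : ∀ n, P n ∧ P (n + 1) := by
    intro n
    induction n with
    | zero => exact ⟨h0, h1⟩
    | succ k ih => exact ⟨ih.2, h k ih.1 ih.2⟩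
  exact fun n => (key n).1

theorem Pseq_two : ∀ (a : ℕ → ℤ) (k : ℕ), Pseq a (k + 2) = a k * Pseq a (k + 1) - Pseq a k :=
  fun _ _ => rfl

theorem Pseq_congr : ∀ (n : ℕ) {a b : ℕ → ℤ}, (∀ k, k + 2 ≤ n → a k = b k) →
    Pseq a n = Pseq b n := by
  refine two_step ?_ ?_ ?_
  · intro a b _; rfl
  · intro a b _; rfl
  intro n ih1 ih2 a b h
  rw [Pseq_two, Pseq_two, h n le_rfl, ih1 (fun k hk => h k (by omega)),
    ih2 (fun k hk => h k (by omega))]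

/-- entries ≥ 2 up to n give positive, strictly increasing P -/
theorem Pseq_mono : ∀ (n : ℕ) {a : ℕ → ℤ}, (∀ k, k < n → 2 ≤ a k) →
    0 < Pseq a (n + 1) ∧ Pseq a n < Pseq a (n + 1) := by
  intro n
  induction n with
  | zero => intro a _; exact ⟨one_pos, one_pos⟩
  | succ m ih =>
    intro a h
    obtain ⟨h1, h2⟩ := ih (fun k hk => h k (by omega))
    have ha := h m (by omega)
    have : Pseq a (m + 2) = a m * Pseq a (m + 1) - Pseq a m := rfl
    constructor <;> nlinarith

def Pos (a : ℕ → ℤ) : Prop := ∀ i, 0 < Pseq a (i + 1)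

theorem Pos.nonneg {a : ℕ → ℤ} (h : Pos a) : ∀ p, 0 ≤ Pseq a p := by
  intro p
  cases p with
  | zero => exact le_rfl
  | succ q => exact (h q).le

/-- Euler continuant identity -/
theorem euler (a : ℕ → ℤ) (p : ℕ) : ∀ j,
    Pseq a (p + 1 + j) =
      Pseq a (p + 1) * Pseq (fun k => a (p + k)) (j + 1)
        - Pseq a p * Pseq (fun k => a (p + 1 + k)) j := by
  refine two_step ?_ ?_ ?_
  · simp [Pseq]
  · have h1 : Pseq (fun k => a (p + k)) 2 = a p := by simp [Pseq]
    have h2 : Pseq a (p + 1 + 1) = a p * Pseq a (p + 1) - Pseq a p := Pseq_two a p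
    rw [h2, h1]
    simp [Pseq]
    ring
  · intro j ih1 ih2
    have e1 : Pseq a (p + 1 + (j + 2)) = a (p + 1 + j) * Pseq a (p + 1 + (j + 1)) - Pseq a (p + 1 + j) := by
      have := Pseq_two a (p + 1 + j)
      rw [show p + 1 + (j + 2) = p + 1 + j + 2 by omega, show p + 1 + (j + 1) = p + 1 + j + 1 by omega]
      exact this
    have e2 : Pseq (fun k => a (p + k)) (j + 3) =
        a (p + 1 + j) * Pseq (fun k => a (p + k)) (j + 2) - Pseq (fun k => a (p + k)) (j + 1) := by
      have := Pseq_two (fun k => a (p + k)) (j + 1)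
      simpa [show p + (j + 1) = p + 1 + j by omega] using this
    have e3 : Pseq (fun k => a (p + 1 + k)) (j + 2) =
        a (p + 1 + j) * Pseq (fun k => a (p + 1 + k)) (j + 1) - Pseq (fun k => a (p + 1 + k)) j := by
      exact Pseq_two (fun k => a (p + 1 + k)) j
    rw [e1, e2, e3, ih1, ih2]
    ring

/-- positivity of all shifts -/
theorem Pos_shift {a : ℕ → ℤ} (h : Pos a) : ∀ p, Pos (fun k => a (p + k)) := by
  have key : ∀ j p, 0 < Pseq (fun k => a (p + k)) (j + 1) := by
    intro j
    induction j with
    | zero => intro p; exact one_pos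
    | succ m ih =>
      intro p
      have he := euler a p (m + 1)
      have h1 : 0 < Pseq a (p + 1) := h p
      have h2 : 0 < Pseq a (p + 1 + (m + 1)) := h (p + 1 + m)
      have h3 : 0 ≤ Pseq a p := h.nonneg p
      have h4 : 0 < Pseq (fun k => a (p + 1 + k)) (m + 1) := ih (p + 1)
      nlinarith [he]
  intro p i; exact key i p

/-- contraction at position j+1 (which must hold a 1) -/
def ctr (a : ℕ → ℤ) (j : ℕ) : ℕ → ℤ := fun k =>
  if k < j then a k
  else if k = j then a j - 1
  else if k = j + 1 then a (j + 2) - 1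
  else a (k + 1)

theorem ctr_lt {a : ℕ → ℤ} {j k : ℕ} (h : k < j) : ctr a j k = a k := by
  simp [ctr, h]

theorem ctr_at {a : ℕ → ℤ} {j : ℕ} : ctr a j j = a j - 1 := by
  simp [ctr]

theorem ctr_at1 {a : ℕ → ℤ} {j : ℕ} : ctr a j (j + 1) = a (j + 2) - 1 := by
  simp [ctr]

theorem ctr_gt {a : ℕ → ℤ} {j k : ℕ} (h : j + 2 ≤ k) : ctr a j k = a (k + 1) := by
  have h1 : ¬ k < j := by omega
  have h2 : ¬ k = j := by omega
  have h3 : ¬ k = j + 1 := by omega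
  simp [ctr, h1, h2, h3]

theorem ctr_Pseq_low {a : ℕ → ℤ} {j : ℕ} : ∀ m, m ≤ j + 1 → Pseq (ctr a j) m = Pseq a m := by
  intro m hm
  exact Pseq_congr m (fun k hk => ctr_lt (by omega))

theorem ctr_Pseq_high {a : ℕ → ℤ} {j : ℕ} (h1 : a (j + 1) = 1) :
    ∀ m, Pseq (ctr a j) (j + 2 + m) = Pseq a (j + 3 + m) := by
  have key0 : Pseq (ctr a j) (j + 2) = Pseq a (j + 3) := by
    have e1 : Pseq (ctr a j) (j + 2) = ctr a j j * Pseq (ctr a j) (j + 1) - Pseq (ctr a j) j :=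
      Pseq_two _ j
    have e2 : Pseq a (j + 3) = a (j + 1) * Pseq a (j + 2) - Pseq a (j + 1) := Pseq_two a (j + 1)
    have e3 : Pseq a (j + 2) = a j * Pseq a (j + 1) - Pseq a j := Pseq_two a j
    rw [e1, ctr_at, ctr_Pseq_low (j+1) le_rfl, ctr_Pseq_low j (by omega), e2, h1, e3]
    ring
  have key1 : Pseq (ctr a j) (j + 3) = Pseq a (j + 4) := by
    have e1 : Pseq (ctr a j) (j + 3) =
        ctr a j (j + 1) * Pseq (ctr a j) (j + 2) - Pseq (ctr a j) (j + 1) := Pseq_two _ (j + 1)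
    have e2 : Pseq a (j + 4) = a (j + 2) * Pseq a (j + 3) - Pseq a (j + 2) := Pseq_two a (j + 2)
    have e3 : Pseq a (j + 3) = a (j + 1) * Pseq a (j + 2) - Pseq a (j + 1) := Pseq_two a (j + 1)
    rw [e1, ctr_at1, key0, ctr_Pseq_low (j+1) le_rfl, e2]
    rw [h1] at e3
    linarith [e3]
  refine two_step key0 key1 ?_
  intro m ih1 ih2
  have e1 : Pseq (ctr a j) (j + 2 + (m + 2)) =
      ctr a j (j + 2 + m) * Pseq (ctr a j) (j + 2 + (m + 1)) - Pseq (ctr a j) (j + 2 + m) := by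
    have := Pseq_two (ctr a j) (j + 2 + m)
    rw [show j + 2 + (m + 2) = j + 2 + m + 2 by omega, show j + 2 + (m + 1) = j + 2 + m + 1 by omega]
    exact this
  have e2 : Pseq a (j + 3 + (m + 2)) =
      a (j + 3 + m) * Pseq a (j + 3 + (m + 1)) - Pseq a (j + 3 + m) := by
    have := Pseq_two a (j + 3 + m)
    rw [show j + 3 + (m + 2) = j + 3 + m + 2 by omega, show j + 3 + (m + 1) = j + 3 + m + 1 by omega]
    exact this
  rw [e1, e2, ih1, ih2, ctr_gt (by omega), show j + 2 + m + 1 = j + 3 + m by omega]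

theorem ctr_Pos {a : ℕ → ℤ} {j : ℕ} (h1 : a (j + 1) = 1) (h : Pos a) : Pos (ctr a j) := by
  intro i
  rcases le_or_gt (i + 1) (j + 1) with hi | hi
  · rw [ctr_Pseq_low _ hi]; exact h i
  · obtain ⟨m, hm⟩ : ∃ m, i + 1 = j + 2 + m := ⟨i + 1 - (j + 2), by omega⟩
    rw [hm, ctr_Pseq_high h1 m]
    have := h (j + 2 + m)
    convert this using 2
    omega

/-- the periodic word (L 1)^∞ -/
def wseq (L : List ℤ) : ℕ → ℤ := fun k => (L ++ [1]).getD (k % (L.length + 1)) 1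

theorem wseq_lt {L : List ℤ} {i : ℕ} (h : i < L.length) : wseq L i = L.getD i 1 := by
  unfold wseq
  rw [Nat.mod_eq_of_lt (by omega), List.getD_append _ _ _ _ h]

theorem wseq_len {L : List ℤ} : wseq L L.length = 1 := by
  unfold wseq
  rw [Nat.mod_eq_of_lt (by omega)]
  simp

theorem wseq_period {L : List ℤ} (i : ℕ) : wseq L (i + (L.length + 1)) = wseq L i := by
  unfold wseq
  rw [Nat.add_mod_right]

theorem wseq_period_mul {L : List ℤ} (i k : ℕ) : wseq L (i + k * (L.length + 1)) = wseq L i := by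
  induction k with
  | zero => simp
  | succ m ih =>
    have : i + (m + 1) * (L.length + 1) = i + m * (L.length + 1) + (L.length + 1) := by ring
    rw [this, wseq_period, ih]

theorem chainSeq_length {L : List ℤ} (k : ℕ) :
    (chainSeq L k).length = (k + 1) * L.length + k := by
  induction k with
  | zero => simp [chainSeq]
  | succ m ih => simp [chainSeq, ih]; ring

theorem chainSeq_getD {L : List ℤ} (hne : L ≠ []) (k : ℕ) :
    ∀ i, i < (chainSeq L k).length → (chainSeq L k).getD i 1 = wseq L i := by
  induction k with
  | zero =>
    intro i hi
    rw [wseq_lt (by simpa [chainSeq] using hi)]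
    rfl
  | succ m ih =>
    intro i hi
    have hlen := chainSeq_length (L := L) m
    show (chainSeq L m ++ 1 :: L).getD i 1 = wseq L i
    rcases lt_or_ge i (chainSeq L m).length with h | h
    · rw [List.getD_append _ _ _ _ h, ih i h]
    · rw [List.getD_eq_getElem?_getD, List.getElem?_append_right h]
      have hi2 : i < (chainSeq L m).length + (1 :: L).length := by
        have : (chainSeq L (m+1)).length = (chainSeq L m).length + (1 :: L).length := by
          simp [chainSeq]
        omega
      have hi' : i - (chainSeq L m).length < (1 :: L).length := by omega
      rcases Nat.eq_or_lt_of_le h with heq | hlt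
      · have : i - (chainSeq L m).length = 0 := by omega
        rw [this]
        have : i = (m + 1) * L.length + m := by omega
        rw [this, show (m + 1) * L.length + m = L.length + (m * L.length + m) from by ring]
        have : L.length + (m * L.length + m) = L.length + m * (L.length + 1) := by ring
        rw [this, wseq_period_mul]
        simp [wseq_len]
      · set d := i - (chainSeq L m).length with hd
        have hd1 : 1 ≤ d := by omega
        have : (1 :: L)[d]? = L[d-1]? := by
          obtain ⟨e, he⟩ : ∃ e, d = e + 1 := ⟨d - 1, by omega⟩
          rw [he]
          simp
        rw [this]
        have hdL : d - 1 < L.length := by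
          have : (1 :: L).length = L.length + 1 := by simp
          omega
        have : i = (d - 1) + (m + 1) * (L.length + 1) := by
          have hx : (m + 1) * (L.length + 1) = (m + 1) * L.length + (m + 1) := by ring
          omega
        rw [this, wseq_period_mul, wseq_lt hdL, List.getD_eq_getElem?_getD]

theorem Pos_wseq_of_adm {L : List ℤ} (hne : L ≠ []) (hadm : ∀ k : ℕ, Admissible (chainSeq L k)) :
    Pos (wseq L) := by
  intro i
  have hr : 1 ≤ L.length := by
    cases L with
    | nil => exact absurd rfl hne
    | cons a t => simp
  have hlen := chainSeq_length (L := L) i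
  have hi : i < (chainSeq L i).length := by
    rw [hlen]; nlinarith
  have := hadm i i hi
  have heq : Pseq (fun k => (chainSeq L i).getD k 1) (i + 1) = Pseq (wseq L) (i + 1) := by
    apply Pseq_congr
    intro k hk
    exact chainSeq_getD hne i k (by omega)
  rw [heq] at this
  exact this

theorem core_single {x : ℤ} (hx : 2 ≤ x) (h : Pos (wseq [x])) : 4 ≤ x := by
  set w := wseq [x] with hw
  have e : ∀ k, w k = if k % 2 = 0 then x else 1 := by
    intro k
    rw [hw]
    unfold wseq
    rcases Nat.mod_two_eq_zero_or_one k with h | h <;> simp [h]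
  have p2 : Pseq w 2 = x := by rw [Pseq_two, e 0]; simp [Pseq]
  have p3 : Pseq w 3 = x - 1 := by rw [Pseq_two, e 1, p2]; simp [Pseq]
  have p4 : Pseq w 4 = x * (x - 1) - x := by rw [Pseq_two, e 2, p3, p2]; norm_num
  have p5 : Pseq w 5 = (x * (x - 1) - x) - (x - 1) := by rw [Pseq_two, e 3, p4, p3]; norm_num
  have p6 : Pseq w 6 = x * ((x * (x - 1) - x) - (x - 1)) - (x * (x - 1) - x) := by
    rw [Pseq_two, e 4, p5, p4]; norm_num
  have h4 := h 3
  have h6 := h 5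
  rw [p4] at h4
  rw [p6] at h6
  by_contra hcon
  push_neg at hcon
  interval_cases x <;> omega

theorem no_two_two {L : List ℤ} (t : ℕ) (hlen : L.length = t + 2)
    (hhead : L.getD 0 1 = 2) (hlast : L.getD (t + 1) 1 = 2) (hP : Pos (wseq L)) : False := by
  set W := wseq L with hW
  have w0 : W 0 = 2 := by rw [hW, wseq_lt (by omega), hhead]
  have wlast : W (t + 1) = 2 := by rw [hW, wseq_lt (by omega), hlast]
  have wr : W (t + 2) = 1 := by rw [hW, ← hlen]; exact wseq_len
  have wr1 : W (t + 3) = 2 := by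
    have hper := wseq_period (L := L) 0
    rw [hlen] at hper
    rw [hW, show t + 3 = 0 + (t + 2 + 1) from by omega, hper, ← hW, w0]
  set c := ctr W (t + 1) with hc
  have hPc : Pos c := ctr_Pos (show W (t + 1 + 1) = 1 from wr) hP
  have c1 : c (t + 1) = 1 := by rw [hc, ctr_at, wlast]; norm_num
  set c' := ctr c t with hc'
  have hPc' : Pos c' := ctr_Pos (show c (t + 1) = 1 from c1) hPc
  have c'0 : c' (t + 1) = 0 := by
    rw [hc', ctr_at1, hc, show t + 2 = t + 1 + 1 from rfl, ctr_at1,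
      show t + 1 + 2 = t + 3 from by omega, wr1]
    norm_num
  have e := Pseq_two c' (t + 1)
  rw [c'0] at e
  have h1 := hPc' t
  have h2 := hPc' (t + 2)
  rw [show t + 2 + 1 = t + 1 + 2 from by omega] at h2
  rw [e] at h2
  linarith

section Reduce

variable {M L : List ℤ}

/-- the partially contracted words for the left reduction -/
def dseq (M L : List ℤ) (k : ℕ) : ℕ → ℤ := fun i =>
  if i = 0 then 2
  else if i ≤ k * (M.length + 1) then wseq M (i - 1)
  else wseq L (i - k * (M.length + 1))

theorem left_reduce (hs : 1 ≤ M.length) (hlen : L.length = M.length + 1)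
    (hL0 : wseq L 0 = 2)
    (hmid : ∀ i, 1 ≤ i → i < M.length → wseq L i = wseq M (i - 1))
    (hlast : wseq L M.length = wseq M (M.length - 1) + 1)
    (hP : Pos (wseq L)) : Pos (wseq M) := by
  set s := M.length with hsdef
  have hper : ∀ x n, wseq M (x + n * (s + 1)) = wseq M x := fun x n => wseq_period_mul x n
  have hperL : ∀ x, wseq L (x + (s + 2)) = wseq L x := by
    intro x
    have := wseq_period (L := L) x
    rwa [hlen] at this
  have dzero : dseq M L 0 = wseq L := by
    funext i
    unfold dseq
    rcases Nat.eq_zero_or_pos i with h0 | h0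
    · simp [h0, hL0.symm]
    · have : ¬ i = 0 := by omega
      have h2 : ¬ i ≤ 0 * (s + 1) := by omega
      simp only [this, if_false, ← hsdef, h2]
      norm_num
  have dctr : ∀ k, ctr (dseq M L k) (k * (s + 1) + s) = dseq M L (k + 1) := by
    intro k
    funext i
    set j := k * (s + 1) + s with hj
    have hj1 : j + 1 = (k + 1) * (s + 1) := by rw [hj]; ring
    rcases lt_or_ge i j with hij | hij
    · rw [ctr_lt hij]
      unfold dseq
      rcases Nat.eq_zero_or_pos i with h0 | h0
      · simp [h0]
      rcases le_or_gt i (k * (s + 1)) with h1 | h1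
      · have h2 : i ≤ (k + 1) * (s + 1) := by nlinarith
        simp only [← hsdef, if_neg (by omega : ¬ i = 0), if_pos h1, if_pos h2]
      · -- k(s+1) < i < j
        have harg1 : 1 ≤ i - k * (s + 1) := by omega
        have harg2 : i - k * (s + 1) < s := by omega
        have h2 : i ≤ (k + 1) * (s + 1) := by omega
        simp only [← hsdef, if_neg (by omega : ¬ i = 0), if_neg (by omega : ¬ i ≤ k * (s+1)), if_pos h2]
        rw [hmid _ harg1 harg2]
        have : i - 1 = (i - k * (s + 1) - 1) + k * (s + 1) := by omega
        rw [this, hper]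
    rcases eq_or_lt_of_le hij with heq | hij'
    · -- i = j
      rw [← heq, ctr_at]
      unfold dseq
      have hnz : ¬ j = 0 := by omega
      have hgt : ¬ j ≤ k * (s + 1) := by omega
      have hle : j ≤ (k + 1) * (s + 1) := by omega
      simp only [← hsdef, if_neg hnz, if_neg hgt, if_pos hle]
      have e1 : j - k * (s + 1) = s := by omega
      rw [e1, hlast]
      have : j - 1 = (s - 1) + k * (s + 1) := by omega
      rw [this, hper]
      ring
    rcases eq_or_lt_of_le (show j + 1 ≤ i from hij') with heq | hij''
    · -- i = j + 1
      rw [← heq, ctr_at1]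
      unfold dseq
      have hgt : ¬ j + 2 ≤ k * (s + 1) := by omega
      have hle : j + 1 ≤ (k + 1) * (s + 1) := by omega
      simp only [← hsdef, if_neg (by omega : ¬ j + 2 = 0), if_neg hgt,
        if_neg (by omega : ¬ j + 1 = 0), if_pos hle]
      have e1 : j + 2 - k * (s + 1) = s + 2 := by omega
      rw [e1, show (s : ℕ) + 2 = 0 + (s + 2) from by omega, hperL, hL0]
      have : j + 1 - 1 = s + k * (s + 1) := by omega
      rw [this, hper, wseq_len]
      norm_num
    · -- i ≥ j + 2
      rw [ctr_gt (by omega)]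
      unfold dseq
      have h1 : ¬ i + 1 ≤ k * (s + 1) := by omega
      have h2 : ¬ i ≤ (k + 1) * (s + 1) := by omega
      simp only [← hsdef, if_neg (by omega : ¬ i + 1 = 0), h1, if_false,
        if_neg (by omega : ¬ i = 0), h2]
      have : i + 1 - k * (s + 1) = (i - (k + 1) * (s + 1)) + (s + 2) := by omega
      rw [this, hperL]
  have dpos : ∀ k, Pos (dseq M L k) := by
    intro k
    induction k with
    | zero => rw [dzero]; exact hP
    | succ m ih =>
      rw [← dctr m]
      refine ctr_Pos ?_ ih
      unfold dseq
      have h1 : ¬ m * (s + 1) + s + 1 ≤ m * (s + 1) := by omega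
      simp only [← hsdef, if_neg (by omega : ¬ m * (s + 1) + s + 1 = 0), if_neg h1]
      have : m * (s + 1) + s + 1 - m * (s + 1) = s + 1 := by omega
      rw [this, ← hlen]
      exact wseq_len
  intro i
  have hsh := Pos_shift (dpos (i + 1)) 1 i
  have hcong : Pseq (fun k' => dseq M L (i + 1) (1 + k')) (i + 1) = Pseq (wseq M) (i + 1) := by
    apply Pseq_congr
    intro k' hk'
    unfold dseq
    have h1 : 1 + k' ≤ (i + 1) * (s + 1) := by nlinarith
    simp only [← hsdef, if_neg (by omega : ¬ 1 + k' = 0), if_pos h1]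
    congr 1
    omega
  rwa [hcong] at hsh

/-- the partially contracted words for the right reduction -/
def eseq (M L : List ℤ) (k : ℕ) : ℕ → ℤ := fun i =>
  if i = 0 then wseq M 0 + 1
  else if i + 1 ≤ k * (M.length + 1) + M.length then wseq M i
  else wseq L (i - k * (M.length + 1))

theorem right_reduce (hs : 1 ≤ M.length) (hlen : L.length = M.length + 1)
    (hL0 : wseq L 0 = wseq M 0 + 1)
    (hmid : ∀ i, 1 ≤ i → i < M.length → wseq L i = wseq M i)
    (hlast : wseq L M.length = 2)
    (hP : Pos (wseq L)) : Pos (wseq M) := by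
  set s := M.length with hsdef
  have hper : ∀ x n, wseq M (x + n * (s + 1)) = wseq M x := fun x n => wseq_period_mul x n
  have hperL : ∀ x, wseq L (x + (s + 2)) = wseq L x := by
    intro x
    have := wseq_period (L := L) x
    rwa [hlen] at this
  have ezero : eseq M L 0 = wseq L := by
    funext i
    unfold eseq
    rcases Nat.eq_zero_or_pos i with h0 | h0
    · simp [h0, hL0.symm]
    · rcases le_or_gt (i + 1) s with h1 | h1
      · simp only [← hsdef, if_neg (by omega : ¬ i = 0), if_pos (by omega : i + 1 ≤ 0 * (s+1) + s)]
        exact (hmid i h0 (by omega)).symm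
      · simp only [← hsdef, if_neg (by omega : ¬ i = 0),
          if_neg (by omega : ¬ i + 1 ≤ 0 * (s+1) + s)]
        norm_num
  have ectr : ∀ k, ctr (eseq M L k) (k * (s + 1) + s) = eseq M L (k + 1) := by
    intro k
    funext i
    set j := k * (s + 1) + s with hj
    have hj1 : j + 1 = (k + 1) * (s + 1) := by rw [hj]; ring
    have hreg : (k + 1) * (s + 1) + s = j + s + 1 := by rw [hj]; ring
    rcases lt_or_ge i j with hij | hij
    · rw [ctr_lt hij]
      unfold eseq
      rcases Nat.eq_zero_or_pos i with h0 | h0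
      · simp [h0]
      have h1 : i + 1 ≤ k * (s + 1) + s := by omega
      simp only [← hsdef, if_neg (by omega : ¬ i = 0), if_pos h1,
        if_pos (show i + 1 ≤ (k+1) * (s + 1) + s by omega)]
    rcases eq_or_lt_of_le hij with heq | hij'
    · -- i = j
      rw [← heq, ctr_at]
      unfold eseq
      have hnz : ¬ j = 0 := by omega
      have hgt : ¬ j + 1 ≤ k * (s + 1) + s := by omega
      simp only [← hsdef, if_neg hnz, if_neg hgt,
        if_pos (show j + 1 ≤ (k+1) * (s + 1) + s by omega)]
      have e1 : j - k * (s + 1) = s := by omega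
      rw [e1, hlast]
      have : j = s + k * (s + 1) := by omega
      rw [this, hper, wseq_len]
      norm_num
    rcases eq_or_lt_of_le (show j + 1 ≤ i from hij') with heq | hij''
    · -- i = j + 1
      rw [← heq, ctr_at1]
      unfold eseq
      have hgt : ¬ j + 2 + 1 ≤ k * (s + 1) + s := by omega
      simp only [← hsdef, if_neg (by omega : ¬ j + 2 = 0), if_neg hgt,
        if_neg (by omega : ¬ j + 1 = 0),
        if_pos (show j + 1 + 1 ≤ (k+1) * (s + 1) + s by omega)]
      have e1 : j + 2 - k * (s + 1) = s + 2 := by omega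
      rw [e1, show (s : ℕ) + 2 = 0 + (s + 2) from by omega, hperL, hL0]
      have : j + 1 = 0 + (k + 1) * (s + 1) := by omega
      rw [this, hper]
      ring
    · -- i ≥ j + 2
      rw [ctr_gt (by omega)]
      unfold eseq
      have h1 : ¬ i + 1 + 1 ≤ k * (s + 1) + s := by omega
      simp only [← hsdef, if_neg (by omega : ¬ i + 1 = 0), if_neg h1,
        if_neg (by omega : ¬ i = 0)]
      rcases le_or_gt (i + 1) ((k + 1) * (s + 1) + s) with h2 | h2
      · -- middle region of e (k+1)
        rw [if_pos h2]
        have harg1 : 1 ≤ i - (k + 1) * (s + 1) := by omega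
        have harg2 : i - (k + 1) * (s + 1) < s := by omega
        have e1 : i + 1 - k * (s + 1) = (i - (k + 1) * (s + 1)) + (s + 2) := by omega
        rw [e1, hperL, hmid _ harg1 harg2]
        have : i = (i - (k + 1) * (s + 1)) + (k + 1) * (s + 1) := by omega
        conv_rhs => rw [this, hper]
      · rw [if_neg (by omega : ¬ i + 1 ≤ (k+1) * (s + 1) + s)]
        have e1 : i + 1 - k * (s + 1) = (i - (k + 1) * (s + 1)) + (s + 2) := by omega
        rw [e1, hperL]
  have epos : ∀ k, Pos (eseq M L k) := by
    intro k
    induction k with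
    | zero => rw [ezero]; exact hP
    | succ m ih =>
      rw [← ectr m]
      refine ctr_Pos ?_ ih
      unfold eseq
      have h1 : ¬ m * (s + 1) + s + 1 + 1 ≤ m * (s + 1) + s := by omega
      simp only [← hsdef, if_neg (by omega : ¬ m * (s + 1) + s + 1 = 0), if_neg h1]
      have : m * (s + 1) + s + 1 - m * (s + 1) = s + 1 := by omega
      rw [this, ← hlen]
      exact wseq_len
  intro i
  have hsh := Pos_shift (epos (i + 1)) (s + 1) i
  have hcong : Pseq (fun k' => eseq M L (i + 1) (s + 1 + k')) (i + 1) = Pseq (wseq M) (i + 1) := by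
    apply Pseq_congr
    intro k' hk'
    unfold eseq
    have h1 : s + 1 + k' + 1 ≤ (i + 1) * (s + 1) + s := by nlinarith
    simp only [← hsdef, if_neg (by omega : ¬ s + 1 + k' = 0), if_pos h1]
    rw [show s + 1 + k' = k' + 1 * (s + 1) from by ring, hper]
  rwa [hcong] at hsh

end Reduce

/-! ### list-level lemmas -/

theorem getLast!_eq {l : List ℤ} (h : l ≠ []) : l.getLast! = l.getLast h :=
  List.getLast!_of_getLast? (List.getLast?_eq_getLast h)

theorem headI_mem {l : List ℤ} (h : l ≠ []) : l.headI ∈ l := by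
  cases l with
  | nil => simp at h
  | cons a t => simp

theorem headI_getD {l : List ℤ} (h : l ≠ []) : l.headI = l.getD 0 1 := by
  cases l with
  | nil => simp at h
  | cons a t => rfl

theorem headI_cons_tail {l : List ℤ} (h : l ≠ []) : l.headI :: l.tail = l := by
  cases l with
  | nil => simp at h
  | cons a t => rfl

theorem getD_dropLast {l : List ℤ} {i : ℕ} (h : i + 1 < l.length) :
    l.dropLast.getD i 1 = l.getD i 1 := by
  have h1 : i < l.dropLast.length := by simpa using (by omega : i < l.length - 1)
  rw [List.getD_eq_getElem _ _ h1, List.getD_eq_getElem _ _ (by omega)]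
  exact List.getElem_dropLast h1

theorem TStep_ne {M L : List ℤ} (h : TStep M L) : L ≠ [] := by
  cases h <;> simp

theorem TStep_length {M L : List ℤ} (h : TStep M L) : L.length = M.length + 1 := by
  have h1 : 1 ≤ M.length := List.length_pos_iff.mpr (by cases h <;> assumption)
  cases h with
  | left hM =>
    simp only [List.length_cons, List.length_append, List.length_dropLast, List.length_nil]
    omega
  | right hM =>
    simp only [List.length_cons, List.length_append, List.length_tail, List.length_nil]
    omega

theorem TStep_two {M L : List ℤ} (h : TStep M L) (h2 : ∀ b ∈ M, 2 ≤ b) : ∀ b ∈ L, 2 ≤ b := by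
  cases h with
  | left hM =>
    intro b hb
    simp only [List.mem_cons, List.mem_append, List.mem_singleton, List.not_mem_nil, or_false] at hb
    rcases hb with rfl | hb | rfl
    · norm_num
    · exact h2 b ((List.dropLast_sublist M).subset hb)
    · have := h2 _ (List.getLast_mem hM)
      omega
  | right hM =>
    intro b hb
    simp only [List.mem_cons, List.mem_append, List.mem_singleton, List.not_mem_nil, or_false] at hb
    rcases hb with rfl | hb | rfl
    · have := h2 _ (headI_mem hM)
      omega
    · exact h2 b ((List.tail_sublist M).subset hb)
    · norm_num

theorem TStep_shape {M L : List ℤ} (h : TStep M L) (h2 : ∀ b ∈ M, 2 ≤ b) :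
    (L.headI = 2 ∧ 3 ≤ L.getLast!) ∨ (3 ≤ L.headI ∧ L.getLast! = 2) := by
  cases h with
  | left hM =>
    left
    constructor
    · rfl
    · rw [getLast!_eq (by simp), List.getLast_cons (by simp), List.getLast_concat]
      have := h2 _ (List.getLast_mem hM)
      omega
  | right hM =>
    right
    constructor
    · have := h2 _ (headI_mem hM)
      show 3 ≤ M.headI + 1
      omega
    · rw [getLast!_eq (by simp), List.getLast_cons (by simp), List.getLast_concat]

def recover (L : List ℤ) : List ℤ :=
  if L.headI = 2 then L.tail.dropLast ++ [L.tail.getLast! - 1]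
  else (L.headI - 1) :: L.tail.dropLast

theorem TStep_recover {M L : List ℤ} (h : TStep M L) (h2 : ∀ b ∈ M, 2 ≤ b) :
    M = recover L := by
  cases h with
  | left hM =>
    unfold recover
    simp only [List.headI_cons, List.tail_cons]
    rw [if_true, List.dropLast_concat, getLast!_eq (by simp), List.getLast_concat]
    rw [show M.getLast hM + 1 - 1 = M.getLast hM from by ring, List.dropLast_append_getLast hM]
  | right hM =>
    unfold recover
    have hh := h2 _ (headI_mem hM)
    simp only [List.headI_cons, List.tail_cons]
    simp only [show ¬ (M.headI + 1 = 2) by omega, if_false, ↓reduceIte]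
    rw [List.dropLast_concat]
    rw [show M.headI + 1 - 1 = M.headI from by ring, headI_cons_tail hM]

theorem TStep_det {M₁ M₂ L : List ℤ} (h1 : TStep M₁ L) (h2 : TStep M₂ L)
    (e1 : ∀ b ∈ M₁, 2 ≤ b) (e2 : ∀ b ∈ M₂, 2 ≤ b) : M₁ = M₂ := by
  rw [TStep_recover h1 e1, TStep_recover h2 e2]

theorem TStepIter_snoc : ∀ (k : ℕ) {E M L : List ℤ}, TStepIter k E M → TStep M L →
    TStepIter (k + 1) E L := by
  intro k
  induction k with
  | zero =>
    intro E M L hEM hML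
    cases hEM
    exact ⟨L, hML, rfl⟩
  | succ m ih =>
    intro E M L hEM hML
    obtain ⟨N, hEN, hNM⟩ := hEM
    exact ⟨N, hEN, ih hNM hML⟩

theorem TStepIter_unsnoc : ∀ (k : ℕ) {E L : List ℤ}, TStepIter (k + 1) E L →
    ∃ M, TStepIter k E M ∧ TStep M L := by
  intro k
  induction k with
  | zero =>
    intro E L ⟨M, hEM, hML⟩
    cases hML
    exact ⟨E, rfl, hEM⟩
  | succ m ih =>
    intro E L ⟨M, hEM, hML⟩
    obtain ⟨N, hMN, hNL⟩ := ih hML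
    exact ⟨N, ⟨M, hEM, hMN⟩, hNL⟩

theorem TStepIter_two : ∀ (k : ℕ) {E L : List ℤ}, TStepIter k E L → (∀ b ∈ E, 2 ≤ b) →
    ∀ b ∈ L, 2 ≤ b := by
  intro k
  induction k with
  | zero =>
    intro E L h hE
    cases h
    exact hE
  | succ m ih =>
    intro E L ⟨M, hEM, hML⟩ hE
    exact ih hML (TStep_two hEM hE)

theorem IsCore_facts {E : List ℤ} (h : IsCore E) : E ≠ [] ∧ 3 ≤ E.headI ∧ 3 ≤ E.getLast! := by
  obtain ⟨h2, hc | hc⟩ := h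
  · obtain ⟨hlen, hh⟩ := hc
    have hne : E ≠ [] := by
      intro hE
      rw [hE] at hlen
      simp at hlen
    refine ⟨hne, by omega, ?_⟩
    cases E with
    | nil => simp at hlen
    | cons a t =>
      simp at hlen
      subst hlen
      simp only [List.headI] at hh
      rw [getLast!_eq (by simp)]
      simp
      omega
  · obtain ⟨hlen, hh, hl⟩ := hc
    refine ⟨?_, hh, hl⟩
    intro hE
    rw [hE] at hlen
    simp at hlen

theorem unique_core : ∀ (k₁ : ℕ) {k₂ : ℕ} {E₁ E₂ L : List ℤ}, IsCore E₁ → IsCore E₂ →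
    TStepIter k₁ E₁ L → TStepIter k₂ E₂ L → E₁ = E₂ := by
  intro k₁
  induction k₁ with
  | zero =>
    intro k₂ E₁ E₂ L hc1 hc2 h1 h2
    cases h1
    cases k₂ with
    | zero => cases h2; rfl
    | succ m =>
      obtain ⟨M, hM, hstep⟩ := TStepIter_unsnoc m h2
      have hM2 : ∀ b ∈ M, 2 ≤ b := TStepIter_two m hM hc2.1
      have := TStep_shape hstep hM2
      have hf := IsCore_facts hc1
      omega
  | succ m ih =>
    intro k₂ E₁ E₂ L hc1 hc2 h1 h2
    obtain ⟨M₁, hM1, hstep1⟩ := TStepIter_unsnoc m h1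
    cases k₂ with
    | zero =>
      cases h2
      have hM12 : ∀ b ∈ M₁, 2 ≤ b := TStepIter_two m hM1 hc1.1
      have := TStep_shape hstep1 hM12
      have hf := IsCore_facts hc2
      omega
    | succ m₂ =>
      obtain ⟨M₂, hM2, hstep2⟩ := TStepIter_unsnoc m₂ h2
      have e1 : ∀ b ∈ M₁, 2 ≤ b := TStepIter_two m hM1 hc1.1
      have e2 : ∀ b ∈ M₂, 2 ≤ b := TStepIter_two m₂ hM2 hc2.1
      have : M₁ = M₂ := TStep_det hstep1 hstep2 e1 e2
      subst this
      exact ih hc1 hc2 hM1 hM2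

theorem exists_core : ∀ (n : ℕ) (L : List ℤ), L.length ≤ n → L ≠ [] → (∀ b ∈ L, 2 ≤ b) →
    Pos (wseq L) → ∃ E, IsCore E ∧ ∃ k, TStepIter k E L := by
  intro n
  induction n with
  | zero =>
    intro L hn hne
    cases L with
    | nil => exact absurd rfl hne
    | cons a T => simp at hn
  | succ n ih =>
    intro L hlen hne h2 hP
    cases L with
    | nil => exact absurd rfl hne
    | cons a T =>
      cases T with
      | nil =>
        have hx : 2 ≤ a := h2 a (by simp)
        have h4 : 4 ≤ a := core_single hx hP
        refine ⟨[a], ⟨?_, Or.inl ⟨rfl, ?_⟩⟩, 0, rfl⟩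
        · intro b hb
          simp at hb
          omega
        · simpa using h4
      | cons b0 T' =>
        set T := b0 :: T' with hT
        have hTne : T ≠ [] := by simp [hT]
        obtain ⟨u, hu⟩ : ∃ u, T.length = u + 1 := ⟨T'.length, by simp [hT]⟩
        set la := T.getLast hTne with hla
        have ha2 : 2 ≤ a := h2 a (by simp)
        have hla2 : 2 ≤ la := h2 la (List.mem_cons_of_mem a (List.getLast_mem hTne))
        have hLlen : (a :: T).length = u + 2 := by simp [hu]
        have hgetDlast : T.getD u 1 = la := by
          rw [List.getD_eq_getElem _ _ (by omega), hla, List.getLast_eq_getElem]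
          congr 1
          omega
        have hwl : ∀ i, i < u + 2 → wseq (a :: T) i = (a :: T).getD i 1 := by
          intro i hi
          rw [wseq_lt (by omega)]
        rcases eq_or_lt_of_le ha2 with ha | ha3 <;> rcases eq_or_lt_of_le hla2 with hl | hl3
        · -- a = 2, la = 2 : impossible
          exact absurd hP (by
            intro hP'
            exact no_two_two u hLlen (by rw [← ha]; rfl)
              (by rw [show (a :: T).getD (u+1) 1 = T.getD u 1 from rfl, hgetDlast, ← hl]) hP')
        · -- a = 2, la ≥ 3 : left reduction
          set M := T.dropLast ++ [la - 1] with hM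
          have hMlen : M.length = u + 1 := by
            rw [hM]
            simp [hu]
          have hMne : M ≠ [] := by simp [hM]
          have hgl : M.getLast hMne = la - 1 := by
            rw [← getLast!_eq hMne, hM, getLast!_eq (show T.dropLast ++ [la - 1] ≠ [] by simp),
              List.getLast_concat]
          have heq : 2 :: (M.dropLast ++ [M.getLast hMne + 1]) = a :: T := by
            rw [hgl, hM, List.dropLast_concat,
              show la - 1 + 1 = la from by ring, hla, List.dropLast_append_getLast hTne, ← ha]
          have hstep : TStep M (a :: T) := by
            have := TStep.left M hMne
            rwa [heq] at this
          have hMget : ∀ j, j < u → M.getD j 1 = T.getD j 1 := by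
            intro j hj
            rw [hM, List.getD_append _ _ _ _ (by simp [hu]; omega), getD_dropLast (by omega)]
          have hMgetu : M.getD u 1 = la - 1 := by
            rw [hM, List.getD_append_right _ _ _ _ (by simp; omega)]
            simp [hu]
          have hPM : Pos (wseq M) := by
            refine left_reduce (by omega) (by omega) ?_ ?_ ?_ hP
            · rw [hwl 0 (by omega), ← ha]; rfl
            · intro i h1 hi2
              rw [hMlen] at hi2
              obtain ⟨j, rfl⟩ : ∃ j, i = j + 1 := ⟨i - 1, by omega⟩
              rw [hwl _ (by omega), wseq_lt (by omega : j + 1 - 1 < M.length)]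
              rw [show (a :: T).getD (j+1) 1 = T.getD j 1 from rfl]
              simp only [Nat.add_sub_cancel]
              exact (hMget j (by omega)).symm
            · rw [hMlen, hwl _ (by omega), wseq_lt (by omega : u + 1 - 1 < M.length)]
              rw [show (a :: T).getD (u+1) 1 = T.getD u 1 from rfl, hgetDlast]
              simp only [Nat.add_sub_cancel]
              rw [hMgetu]
              ring
          have hM2 : ∀ bb ∈ M, 2 ≤ bb := by
            intro bb hbb
            rw [hM] at hbb
            rcases List.mem_append.mp hbb with h | h
            · exact h2 bb (List.mem_cons_of_mem a ((List.dropLast_sublist T).subset h))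
            · simp at h
              omega
          obtain ⟨E, hcore, k, hiter⟩ := ih M (by omega) hMne hM2 hPM
          exact ⟨E, hcore, k + 1, TStepIter_snoc k hiter hstep⟩
        · -- a ≥ 3, la = 2 : right reduction
          set M := (a - 1) :: T.dropLast with hM
          have hMlen : M.length = u + 1 := by
            rw [hM]
            simp [hu]
          have hMne : M ≠ [] := by simp [hM]
          have heq : (M.headI + 1) :: (M.tail ++ [2]) = a :: T := by
            rw [hM]
            simp only [List.headI_cons, List.tail_cons]
            rw [show a - 1 + 1 = a from by ring, hl, hla, List.dropLast_append_getLast hTne]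
          have hstep : TStep M (a :: T) := by
            have := TStep.right M hMne
            rwa [heq] at this
          have hPM : Pos (wseq M) := by
            refine right_reduce (by omega) (by omega) ?_ ?_ ?_ hP
            · rw [hwl 0 (by omega), wseq_lt (by omega : 0 < M.length)]
              rw [show (a :: T).getD 0 1 = a from rfl, hM]
              rw [show ((a-1) :: T.dropLast).getD 0 1 = a - 1 from rfl]
              ring
            · intro i h1 hi2
              rw [hMlen] at hi2
              obtain ⟨j, rfl⟩ : ∃ j, i = j + 1 := ⟨i - 1, by omega⟩
              rw [hwl _ (by omega), wseq_lt (by omega : j + 1 < M.length)]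
              rw [show (a :: T).getD (j+1) 1 = T.getD j 1 from rfl, hM]
              rw [show ((a-1) :: T.dropLast).getD (j+1) 1 = T.dropLast.getD j 1 from rfl]
              rw [getD_dropLast (by omega)]
            · rw [hMlen, hwl _ (by omega)]
              rw [show (a :: T).getD (u+1) 1 = T.getD u 1 from rfl, hgetDlast, ← hl]
          have hM2 : ∀ bb ∈ M, 2 ≤ bb := by
            intro bb hbb
            rw [hM] at hbb
            rcases List.mem_cons.mp hbb with h | h
            · omega
            · exact h2 bb (List.mem_cons_of_mem a ((List.dropLast_sublist T).subset h))
          obtain ⟨E, hcore, k, hiter⟩ := ih M (by omega) hMne hM2 hPM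
          exact ⟨E, hcore, k + 1, TStepIter_snoc k hiter hstep⟩
        · -- a ≥ 3, la ≥ 3 : core
          refine ⟨a :: T, ⟨h2, Or.inr ⟨by simp [hu], by simpa using (show 3 ≤ a by omega), ?_⟩⟩, 0, rfl⟩
          rw [getLast!_eq (by simp), List.getLast_cons hTne, ← hla]
          omega

end S9

/-- If `[b₁,…,b_r]` (all entries `≥ 2`) is admissible for chains, then there
exists a unique core `[e₁,…,eₛ]` such that `[b₁,…,b_r]` is obtained from
`[e₁,…,eₛ]` by finitely many (possibly zero) T-chain algorithm steps. -/
theorem stmt9 (L : List ℤ) (hne : L ≠ []) (h2 : ∀ b ∈ L, 2 ≤ b)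
    (hadm : ∀ k : ℕ, Admissible (chainSeq L k)) :
    ∃! E : List ℤ, IsCore E ∧ ∃ k : ℕ, TStepIter k E L := by
  have hP : S9.Pos (S9.wseq L) := S9.Pos_wseq_of_adm hne hadm
  obtain ⟨E, hcore, k, hiter⟩ := S9.exists_core L.length L le_rfl hne h2 hP
  refine ⟨E, ⟨hcore, k, hiter⟩, ?_⟩
  rintro E' ⟨hcore', k', hiter'⟩
  exact S9.unique_core k' hcore' hcore hiter' hiter
end

section
/- Let [b_1,…,b_r] be a core and let k ≥ 1. Consider the sequence consisting of k+1 consecutive copies of (b_1,…,b_r) separated by k single entries equal to 1. Contracting the k inserted entries equal to 1 one at a time (each contraction replacing a consecutive triple (x, 1, y) by (x−1, y−1)) yields a sequence [b^k_1,…,b^k_{r_k}] all of whose entries are ≥ 2, of length r_k = r·(k+1), and satisfying Σ_{j=1}^{r_k} (b^k_j − 2) = (k+1)·Σ_{j=1}^{r} (b_j − 2) − 2k. -/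
/-- A single contraction of an entry equal to `1`: a consecutive triple
`(x, 1, y)` is replaced by the pair `(x−1, y−1)`. -/
def ContractStep (L L' : List ℤ) : Prop :=
  ∃ (p s : List ℤ) (x y : ℤ),
    L = p ++ x :: 1 :: y :: s ∧ L' = p ++ (x - 1) :: (y - 1) :: s

/-- `ContractIter k L L'` means `L'` is obtained from `L` by `k` contractions
of entries equal to `1`, performed one at a time. -/
def ContractIter : ℕ → List ℤ → List ℤ → Prop
  | 0 => fun L L' => L = L'
  | (k + 1) => fun L L' => ∃ M, ContractStep L M ∧ ContractIter k M L'

/-! ### getLast! helpers -/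

lemma gl_concat (l : List ℤ) (a : ℤ) : (l ++ [a]).getLast! = a :=
  List.getLast!_of_getLast? (List.getLast?_concat (l := l))

lemma gl_append (p l : List ℤ) (h : l ≠ []) : (p ++ l).getLast! = l.getLast! := by
  obtain ⟨l', a, rfl⟩ := (List.eq_nil_or_concat l).resolve_left h
  simp only [List.concat_eq_append]
  rw [← List.append_assoc, gl_concat, gl_concat]

/-! ### blocks separated by ones -/

def interT : List (List ℤ) → List ℤ
  | [] => []
  | B :: Bs => 1 :: (B ++ interT Bs)

def inter : List (List ℤ) → List ℤ
  | [] => []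
  | B :: Bs => B ++ interT Bs

lemma interT_eq {Bs : List (List ℤ)} (h : Bs ≠ []) : interT Bs = 1 :: inter Bs := by
  cases Bs with
  | nil => simp at h
  | cons B Bs => rfl

lemma core_ne_nil {E : List ℤ} (h : IsCore E) : E ≠ [] := by
  rcases h.2 with ⟨h1, _⟩ | ⟨h1, _⟩ <;> exact List.ne_nil_of_length_pos (by omega)

lemma core_head {E : List ℤ} (h : IsCore E) : 3 ≤ E.headI := by
  rcases h.2 with ⟨_, h2⟩ | ⟨_, h2, _⟩ <;> omega

lemma core_last {E : List ℤ} (h : IsCore E) : 3 ≤ E.getLast! := by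
  rcases h.2 with ⟨h1, h2⟩ | ⟨_, _, h3⟩
  · obtain ⟨a, rfl⟩ := List.length_eq_one_iff.mp h1
    have : ([a] : List ℤ).getLast! = a := gl_concat [] a
    rw [this]
    have h4 : 4 ≤ a := by simpa using h2
    omega
  · exact h3

lemma core_join {p t : List ℤ} {x y : ℤ}
    (h1 : IsCore (p ++ [x])) (h2 : IsCore (y :: t)) :
    IsCore (p ++ (x - 1) :: (y - 1) :: t) := by
  have hx : 3 ≤ x := by have := core_last h1; rwa [gl_concat] at this
  have hy : 3 ≤ y := core_head h2
  constructor
  · intro e he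
    rcases List.mem_append.mp he with he | he
    · exact h1.1 e (List.mem_append.mpr (Or.inl he))
    · rcases he with _ | ⟨_, he⟩
      · omega
      rcases he with _ | ⟨_, he⟩
      · omega
      · exact h2.1 e (List.mem_cons_of_mem _ he)
  · right
    refine ⟨by simp; omega, ?_, ?_⟩
    · cases p with
      | nil =>
        rcases h1.2 with ⟨_, h4⟩ | ⟨hl, _⟩
        · simp only [List.nil_append, List.headI] at h4 ⊢; omega
        · simp at hl
      | cons a p' => simpa using core_head h1
    · cases t with
      | nil =>
        have : 4 ≤ y := by
          rcases h2.2 with ⟨_, h4⟩ | ⟨hl, _⟩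
          · simpa using h4
          · simp at hl
        have he : p ++ (x - 1) :: (y - 1) :: ([] : List ℤ) = (p ++ [x - 1]) ++ [y - 1] := by
          simp
        rw [he, gl_concat]
        omega
      | cons c t' =>
        have he : p ++ (x - 1) :: (y - 1) :: c :: t' = (p ++ [x - 1, y - 1]) ++ c :: t' := by
          simp
        rw [he, gl_append _ _ (by simp)]
        have := core_last h2
        rwa [show (y :: c :: t').getLast! = (c :: t').getLast! from
          gl_append [y] (c :: t') (by simp)] at this

/-- Locating the contracted `1` inside `B ++ 1 :: rest`. -/
lemma split : ∀ (B p : List ℤ) (x y : ℤ) (s rest : List ℤ),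
    (∀ e ∈ B, 2 ≤ e) → 2 ≤ rest.headI →
    B ++ 1 :: rest = p ++ x :: 1 :: y :: s →
    (B = p ++ [x] ∧ rest = y :: s) ∨
      (∃ p', p = B ++ 1 :: p' ∧ rest = p' ++ x :: 1 :: y :: s)
  | [], p, x, y, s, rest, hB, hr, h => by
    cases p with
    | nil =>
      simp only [List.nil_append, List.cons.injEq] at h
      obtain ⟨hx, h2⟩ := h
      rw [h2] at hr
      simp [List.headI] at hr
    | cons a p' =>
      simp only [List.nil_append, List.cons_append, List.cons.injEq] at h
      exact Or.inr ⟨p', by simp [h.1.symm], h.2⟩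
  | b :: B', p, x, y, s, rest, hB, hr, h => by
    cases p with
    | nil =>
      simp only [List.cons_append, List.nil_append, List.cons.injEq] at h
      obtain ⟨hbx, h2⟩ := h
      cases B' with
      | nil =>
        simp only [List.nil_append, List.cons.injEq] at h2
        exact Or.inl ⟨by simp [hbx], h2.2⟩
      | cons c B'' =>
        simp only [List.cons_append, List.cons.injEq] at h2
        have : 2 ≤ c := hB c (by simp)
        omega
    | cons a p' =>
      simp only [List.cons_append, List.cons.injEq] at h
      obtain ⟨hab, h2⟩ := h
      rcases split B' p' x y s rest (fun e he => hB e (by simp [he])) hr h2 with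
        ⟨e1, e2⟩ | ⟨q, e1, e2⟩
      · exact Or.inl ⟨by rw [hab, e1]; rfl, e2⟩
      · exact Or.inr ⟨q, by rw [hab, e1]; rfl, e2⟩

/-- A contraction step on a list of cores merges two adjacent cores. -/
lemma stepA : ∀ (Bs : List (List ℤ)) (M : List ℤ), Bs ≠ [] → (∀ B ∈ Bs, IsCore B) →
    ContractStep (inter Bs) M →
    ∃ Bs', Bs' ≠ [] ∧ (∀ B ∈ Bs', IsCore B) ∧ Bs'.length + 1 = Bs.length ∧ M = inter Bs'
  | [], M, hne, _, _ => absurd rfl hne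
  | [B], M, _, hc, hstep => by
    obtain ⟨p, s, x, y, hL, _⟩ := hstep
    have h1 : (1 : ℤ) ∈ B := by
      have : (1 : ℤ) ∈ inter [B] := by rw [hL]; simp
      simpa [inter, interT] using this
    have := (hc B (by simp)).1 1 h1
    omega
  | B₁ :: B₂ :: rest, M, _, hc, hstep => by
    obtain ⟨p, s, x, y, hL, hM⟩ := hstep
    have hc1 : IsCore B₁ := hc B₁ (by simp)
    have hc2 : IsCore B₂ := hc B₂ (by simp)
    obtain ⟨y₂, t, hB₂⟩ := List.exists_cons_of_ne_nil (core_ne_nil hc2)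
    have hy₂ : 3 ≤ y₂ := by
      have := core_head hc2
      rw [hB₂] at this
      simpa using this
    have hhead : 2 ≤ (B₂ ++ interT rest).headI := by
      rw [hB₂]
      simp only [List.cons_append, List.headI]
      omega
    have hL' : B₁ ++ 1 :: (B₂ ++ interT rest) = p ++ x :: 1 :: y :: s := by
      simpa [inter, interT] using hL
    rcases split B₁ p x y s (B₂ ++ interT rest) hc1.1 hhead hL' with
      ⟨e1, e2⟩ | ⟨p', e1, e2⟩
    · -- the separator between B₁ and B₂ is contracted
      rw [hB₂] at e2
      have hyt : y₂ = y ∧ t ++ interT rest = s := by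
        simpa using e2
      refine ⟨(p ++ (x - 1) :: (y - 1) :: t) :: rest, by simp, ?_, by simp, ?_⟩
      · intro B hB
        rcases List.mem_cons.mp hB with rfl | hB
        · exact core_join (e1 ▸ hc1) (hyt.1 ▸ hB₂ ▸ hc2)
        · exact hc B (List.mem_cons_of_mem _ (List.mem_cons_of_mem _ hB))
      · rw [hM, ← hyt.2]
        simp [inter, interT]
    · -- the contraction happens inside B₂ :: rest
      have hstep' : ContractStep (inter (B₂ :: rest)) (p' ++ (x - 1) :: (y - 1) :: s) :=
        ⟨p', s, x, y, by simpa [inter] using e2, rfl⟩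
      obtain ⟨Bs', hne', hc', hlen', hM'⟩ :=
        stepA (B₂ :: rest) (p' ++ (x - 1) :: (y - 1) :: s) (by simp)
          (fun B hB => hc B (by simp [hB])) hstep'
      refine ⟨B₁ :: Bs', by simp, ?_, by simpa using hlen', ?_⟩
      · intro B hB
        rcases List.mem_cons.mp hB with rfl | hB
        · exact hc1
        · exact hc' B hB
      · rw [hM, e1, show inter (B₁ :: Bs') = B₁ ++ interT Bs' from rfl,
          interT_eq hne', ← hM']
        simp

/-- Existence: the separator between the first two cores can be contracted. -/
lemma stepEx (B₁ B₂ : List ℤ) (rest : List (List ℤ)) (h1 : IsCore B₁) (h2 : IsCore B₂) :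
    ∃ C, IsCore C ∧ ContractStep (inter (B₁ :: B₂ :: rest)) (inter (C :: rest)) := by
  obtain ⟨p, x, hB₁⟩ := (List.eq_nil_or_concat B₁).resolve_left (core_ne_nil h1)
  rw [List.concat_eq_append] at hB₁
  obtain ⟨y, t, hB₂⟩ := List.exists_cons_of_ne_nil (core_ne_nil h2)
  refine ⟨p ++ (x - 1) :: (y - 1) :: t, core_join (hB₁ ▸ h1) (hB₂ ▸ h2),
    p, t ++ interT rest, x, y, ?_, ?_⟩
  · rw [hB₁, hB₂]; simp [inter, interT]
  · simp [inter]

/-- Main invariant lemma. -/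
lemma main : ∀ (m : ℕ) (Bs : List (List ℤ)), Bs.length = m + 1 → (∀ B ∈ Bs, IsCore B) →
    (∃ E, ContractIter m (inter Bs) E) ∧
      ∀ E, ContractIter m (inter Bs) E → ∀ x ∈ E, 2 ≤ x
  | 0, Bs, hlen, hc => by
    obtain ⟨C, rfl⟩ := List.length_eq_one_iff.mp hlen
    refine ⟨⟨inter [C], rfl⟩, ?_⟩
    rintro E rfl x hx
    have hC : IsCore C := hc C (by simp)
    exact hC.1 x (by simpa [inter, interT] using hx)
  | m + 1, Bs, hlen, hc => by
    match Bs, hlen with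
    | B₁ :: B₂ :: rest, hlen =>
      have hlen' : rest.length = m := by simpa using hlen
      constructor
      · obtain ⟨C, hC, hstep⟩ := stepEx B₁ B₂ rest (hc _ (by simp)) (hc _ (by simp))
        obtain ⟨E, hE⟩ := (main m (C :: rest) (by simp [hlen'])
          (by
            intro B hB
            rcases List.mem_cons.mp hB with rfl | hB
            · exact hC
            · exact hc B (List.mem_cons_of_mem _ (List.mem_cons_of_mem _ hB)))).1
        exact ⟨E, inter (C :: rest), hstep, hE⟩
      · rintro E ⟨M, hstep, hiter⟩
        obtain ⟨Bs', hne, hc', hlen'', hM⟩ :=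
          stepA (B₁ :: B₂ :: rest) M (by simp) hc hstep
        have : Bs'.length = m + 1 := by simp at hlen''; omega
        exact (main m Bs' this hc').2 E (hM ▸ hiter)

/-! ### length and sum bookkeeping -/

lemma step_len {L L' : List ℤ} (h : ContractStep L L') : L.length = L'.length + 1 := by
  obtain ⟨p, s, x, y, rfl, rfl⟩ := h
  simp
  omega

lemma step_sum {L L' : List ℤ} (h : ContractStep L L') : L'.sum = L.sum - 3 := by
  obtain ⟨p, s, x, y, rfl, rfl⟩ := h
  simp [List.sum_append]
  ring

lemma iter_len_sum : ∀ (m : ℕ) (L E : List ℤ), ContractIter m L E →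
    L.length = E.length + m ∧ E.sum = L.sum - 3 * m
  | 0, L, E, h => by rw [show L = E from h]; simp
  | m + 1, L, E, ⟨M, hstep, hiter⟩ => by
    obtain ⟨h1, h2⟩ := iter_len_sum m M E hiter
    refine ⟨by rw [step_len hstep, h1]; ring, ?_⟩
    rw [h2, step_sum hstep]
    push_cast
    ring

lemma chainSeq_len (L : List ℤ) : ∀ k, (chainSeq L k).length = L.length * (k + 1) + k
  | 0 => by simp [chainSeq]
  | k + 1 => by
    simp [chainSeq, chainSeq_len L k]
    ring

lemma chainSeq_sum (L : List ℤ) : ∀ k, (chainSeq L k).sum = ((k : ℤ) + 1) * L.sum + k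
  | 0 => by simp [chainSeq]
  | k + 1 => by
    simp [chainSeq, List.sum_append, chainSeq_sum L k]
    push_cast
    ring

lemma inter_concat : ∀ (Bs : List (List ℤ)), Bs ≠ [] → ∀ B,
    inter (Bs ++ [B]) = inter Bs ++ 1 :: B
  | [], h, _ => absurd rfl h
  | [C], _, B => by simp [inter, interT]
  | C :: D :: Bs, _, B => by
    have ih := inter_concat (D :: Bs) (by simp) B
    show C ++ interT ((D :: Bs) ++ [B]) = (C ++ interT (D :: Bs)) ++ 1 :: B
    rw [interT_eq (by simp : (D :: Bs) ++ [B] ≠ []), interT_eq (by simp : (D :: Bs) ≠ ([]:List (List ℤ))), ih]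
    simp

lemma chainSeq_eq_inter (b : List ℤ) : ∀ k, chainSeq b k = inter (List.replicate (k + 1) b)
  | 0 => by simp [chainSeq, inter, interT]
  | k + 1 => by
    rw [show chainSeq b (k+1) = chainSeq b k ++ 1 :: b from rfl, chainSeq_eq_inter b k,
      ← inter_concat (List.replicate (k+1) b) (by simp) b,
      ← List.replicate_succ' (n := k+1) (a := b)]

lemma map_sub_two_sum : ∀ (L : List ℤ), (L.map (fun x => x - 2)).sum = L.sum - 2 * L.length
  | [] => by simp
  | a :: L => by
    simp [map_sub_two_sum L]
    push_cast
    ring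

/-- Let `[b₁,…,b_r]` be a core and `k ≥ 1`. Contracting, one at a time, the
`k` inserted entries equal to `1` in the chain of `k+1` consecutive copies of
`(b₁,…,b_r)` separated by `k` single entries equal to `1` yields a sequence
`[b^k₁,…,b^k_{r_k}]` all of whose entries are `≥ 2`, of length
`r_k = r·(k+1)`, satisfying `Σ (b^k_j − 2) = (k+1)·Σ (b_j − 2) − 2k`. -/
theorem stmt13 (b : List ℤ) (hb : IsCore b) (k : ℕ) (hk : 1 ≤ k) :
    (∃ E : List ℤ, ContractIter k (chainSeq b k) E) ∧
      ∀ E : List ℤ, ContractIter k (chainSeq b k) E →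
        (∀ x ∈ E, 2 ≤ x) ∧ E.length = b.length * (k + 1) ∧
          (E.map (fun x => x - 2)).sum =
            ((k : ℤ) + 1) * (b.map (fun x => x - 2)).sum - 2 * (k : ℤ) := by
  have hcores : ∀ B ∈ List.replicate (k + 1) b, IsCore B := by
    intro B hB
    rw [List.eq_of_mem_replicate hB]
    exact hb
  have hmain := main k (List.replicate (k + 1) b) (by simp) hcores
  rw [← chainSeq_eq_inter b k] at hmain
  refine ⟨hmain.1, fun E hE => ?_⟩
  obtain ⟨hlen, hsum⟩ := iter_len_sum k (chainSeq b k) E hE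
  rw [chainSeq_len b k] at hlen
  rw [chainSeq_sum b k] at hsum
  have hElen : E.length = b.length * (k + 1) := by omega
  refine ⟨hmain.2 E hE, hElen, ?_⟩
  rw [map_sub_two_sum, map_sub_two_sum, hsum, hElen]
  push_cast
  ring
end

section
/- Let r ≥ 1 and let b_1,…,b_r be integers, all ≥ 2. Let a_1,…,a_r be the discrepancies of [b_1,…,b_r], and let a'_1,…,a'_{r+1} be the discrepancies of the sequence [b_1 + 1, b_2, …, b_r, 2]. Then a_j > a'_j for every j = 1,…,r. -/
/-- Minimum propagation: if `x` satisfies the tridiagonal equations with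
coefficients `≥ 2` and nonpositive right-hand sides, and `m ≤ 0` is a lower
bound of `x` on `[0, n+1]`, then any index `j ≤ n` where the value `m` is
attained propagates the value `m` down to index `0`. -/
private lemma prop_lemma (n : ℕ) (c f x : ℕ → ℚ)
    (hf : ∀ j, 1 ≤ j → j ≤ n → f j ≤ 0)
    (hc : ∀ j, 1 ≤ j → j ≤ n → (2:ℚ) ≤ c j)
    (heq : ∀ j, 1 ≤ j → j ≤ n → -c j * x j + x (j-1) + x (j+1) = f j)
    (m : ℚ) (hm : m ≤ 0) (hmin : ∀ j, j ≤ n+1 → m ≤ x j) :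
    ∀ j, j ≤ n → x j = m → x 0 = m := by
  intro j
  induction j with
  | zero => exact fun _ h => h
  | succ k ih =>
    intro hk hxk
    have heqk := heq (k+1) (by omega) hk
    have hck := hc (k+1) (by omega) hk
    have hfk := hf (k+1) (by omega) hk
    have hmk : m ≤ x k := hmin k (by omega)
    have hmk2 : m ≤ x (k+2) := hmin (k+2) (by omega)
    have hcm : c (k+1) * m ≤ 2 * m := by nlinarith
    have hs : k + 1 - 1 = k := rfl
    rw [hs, hxk] at heqk
    have hxkm : x k = m := le_antisymm (by linarith) hmk
    exact ih (by omega) hxkm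

private lemma nonneg_lemma (n : ℕ) (c f x : ℕ → ℚ)
    (hf : ∀ j, 1 ≤ j → j ≤ n → f j ≤ 0)
    (hc : ∀ j, 1 ≤ j → j ≤ n → (2:ℚ) ≤ c j)
    (heq : ∀ j, 1 ≤ j → j ≤ n → -c j * x j + x (j-1) + x (j+1) = f j)
    (hx0 : 0 ≤ x 0) (hxn : 0 ≤ x (n+1)) :
    ∀ j, j ≤ n+1 → 0 ≤ x j := by
  by_contra hcon
  push_neg at hcon
  obtain ⟨jb, hjb, hxjb⟩ := hcon
  obtain ⟨j₀, hj₀mem, hj₀min⟩ :=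
    (Finset.range (n+2)).exists_min_image x ⟨jb, Finset.mem_range.mpr (by omega)⟩
  have hmin : ∀ j, j ≤ n+1 → x j₀ ≤ x j :=
    fun j hj => hj₀min j (Finset.mem_range.mpr (by omega))
  have hm0 : x j₀ < 0 := lt_of_le_of_lt (hmin jb hjb) hxjb
  have hj₀n : j₀ ≤ n := by
    by_contra hh
    have hj : j₀ = n + 1 := by
      have := Finset.mem_range.mp hj₀mem; omega
    rw [hj] at hm0; linarith
  have h0 := prop_lemma n c f x hf hc heq (x j₀) (le_of_lt hm0) hmin j₀ hj₀n rfl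
  linarith

/-- Let `r ≥ 1` and let `b₁,…,b_r` be integers, all `≥ 2`. Let `a₁,…,a_r` be
the discrepancies of `[b₁,…,b_r]`, i.e. the unique rationals satisfying (with
the convention `a₀ = a_{r+1} = 0`) the equations
`−bⱼ·aⱼ + a_{j−1} + a_{j+1} = bⱼ − 2` for `j = 1,…,r`, and let
`a'₁,…,a'_{r+1}` be the discrepancies of `[b₁ + 1, b₂, …, b_r, 2]`. Then
`aⱼ > a'ⱼ` for every `j = 1,…,r`. -/
theorem stmt14 (r : ℕ) (hr : 1 ≤ r) (b : ℕ → ℤ)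
    (hb : ∀ j : ℕ, 1 ≤ j → j ≤ r → 2 ≤ b j)
    (a : ℕ → ℚ) (ha0 : a 0 = 0) (har : a (r + 1) = 0)
    (ha : ∀ j : ℕ, 1 ≤ j → j ≤ r →
      -(b j : ℚ) * a j + a (j - 1) + a (j + 1) = (b j : ℚ) - 2)
    (b' : ℕ → ℤ) (hb'1 : b' 1 = b 1 + 1)
    (hb'mid : ∀ j : ℕ, 2 ≤ j → j ≤ r → b' j = b j) (hb'last : b' (r + 1) = 2)
    (a' : ℕ → ℚ) (ha'0 : a' 0 = 0) (ha'r : a' (r + 2) = 0)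
    (ha' : ∀ j : ℕ, 1 ≤ j → j ≤ r + 1 →
      -(b' j : ℚ) * a' j + a' (j - 1) + a' (j + 1) = (b' j : ℚ) - 2) :
    ∀ j : ℕ, 1 ≤ j → j ≤ r → a' j < a j := by
  have hb1 := hb 1 le_rfl hr
  -- b' is ≥ 2 everywhere in range
  have hb'ge : ∀ j, 1 ≤ j → j ≤ r + 1 → (2:ℚ) ≤ (b' j : ℚ) := by
    intro j h1 h2
    by_cases hj1 : j = 1
    · subst hj1; rw [hb'1]; push_cast; push_cast at hb1 ⊢; exact_mod_cast by omega
    · by_cases hjr : j = r + 1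
      · subst hjr; rw [hb'last]; norm_num
      · rw [hb'mid j (by omega) (by omega)]
        have := hb j (by omega) (by omega)
        exact_mod_cast this
  -- Step 1: a' ≤ 0 on [0, r+2]
  have hstep1 : ∀ j, j ≤ r + 2 → a' j ≤ 0 := by
    have key := nonneg_lemma (r+1) (fun j => (b' j : ℚ)) (fun j => 2 - (b' j : ℚ))
      (fun j => -a' j)
      (fun j h1 h2 => by have := hb'ge j h1 h2; linarith)
      (fun j h1 h2 => hb'ge j h1 h2)
      (fun j h1 h2 => by
        have h := ha' j h1 h2
        linear_combination -h)
      (by simp [ha'0]) (by simp [ha'r])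
    intro j hj
    have := key j (by omega)
    linarith
  -- Step 1.5: a' 1 > -1 (via positivity of y = a' + 1)
  have hyeq : ∀ j, 1 ≤ j → j ≤ r + 1 →
      -(b' j : ℚ) * ((fun i => a' i + 1) j) + ((fun i => a' i + 1) (j-1))
        + ((fun i => a' i + 1) (j+1)) = (fun _ => (0:ℚ)) j := by
    intro j h1 h2
    have h := ha' j h1 h2
    simp only
    linear_combination h
  have hynn : ∀ j, j ≤ r + 2 → 0 ≤ a' j + 1 := by
    have key := nonneg_lemma (r+1) (fun j => (b' j : ℚ)) (fun _ => (0:ℚ))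
      (fun i => a' i + 1)
      (fun j _ _ => le_refl 0)
      (fun j h1 h2 => hb'ge j h1 h2)
      hyeq
      (by simp [ha'0]) (by simp [ha'r])
    intro j hj
    have := key j (by omega)
    simpa using this
  have hstep15 : -1 < a' 1 := by
    by_contra hcon
    push_neg at hcon
    have hy1 : a' 1 + 1 = 0 := le_antisymm (by linarith) (hynn 1 (by omega))
    have h0 := prop_lemma (r+1) (fun j => (b' j : ℚ)) (fun _ => (0:ℚ))
      (fun i => a' i + 1)
      (fun j _ _ => le_refl 0)
      (fun j h1 h2 => hb'ge j h1 h2)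
      hyeq
      0 le_rfl (fun j hj => by simpa using hynn j (by omega))
      1 (by omega) (by simpa using hy1)
    simp [ha'0] at h0
  -- Step 2: d = a - a' is ≥ 0 on [0, r+1]
  set d : ℕ → ℚ := fun j => a j - a' j with hd_def
  set f : ℕ → ℚ := fun j => if j = 1 then (-1 - a' 1) else 0 with hf_def
  have heq_d : ∀ j, 1 ≤ j → j ≤ r →
      -(b j : ℚ) * d j + d (j-1) + d (j+1) = f j := by
    intro j h1 h2
    have hA := ha j h1 h2
    by_cases hj1 : j = 1
    · subst hj1
      have hA' := ha' 1 le_rfl (by omega)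
      rw [hb'1] at hA'
      push_cast at hA'
      simp only [hd_def, hf_def, if_pos rfl]
      norm_num at hA hA' ⊢
      linear_combination hA - hA'
    · have hA' := ha' j (by omega) (by omega)
      rw [hb'mid j (by omega) (by omega)] at hA'
      simp only [hd_def, hf_def, if_neg hj1]
      linear_combination hA - hA'
  have hf_d : ∀ j, 1 ≤ j → j ≤ r → f j ≤ 0 := by
    intro j _ _
    simp only [hf_def]
    by_cases hj1 : j = 1
    · rw [if_pos hj1]; linarith
    · rw [if_neg hj1]
  have hc_d : ∀ j, 1 ≤ j → j ≤ r → (2:ℚ) ≤ (b j : ℚ) := by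
    intro j h1 h2; exact_mod_cast hb j h1 h2
  have hd_nn : ∀ j, j ≤ r + 1 → 0 ≤ d j := by
    apply nonneg_lemma r (fun j => (b j : ℚ)) f d hf_d hc_d heq_d
    · simp [hd_def, ha0, ha'0]
    · simp only [hd_def, har]
      have := hstep1 (r+1) (by omega)
      linarith
  -- Step 3: strict positivity of d on [1, r]
  have hne : ∀ j, j ≤ r → 1 ≤ j → d j ≠ 0 := by
    intro j
    induction j with
    | zero => omega
    | succ k ih =>
      intro hk _
      intro hzero
      by_cases hk0 : k = 0
      · subst hk0
        have h := heq_d 1 le_rfl hr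
        simp only [hf_def, if_pos rfl] at h
        rw [hzero] at h
        have h2 : 0 ≤ d 2 := hd_nn 2 (by omega)
        have h0 : d 0 = 0 := by simp [hd_def, ha0, ha'0]
        rw [show (1:ℕ) - 1 = 0 from rfl, h0] at h
        linarith
      · have h := heq_d (k+1) (by omega) hk
        simp only [hf_def, if_neg (by omega : k + 1 ≠ 1)] at h
        rw [hzero] at h
        have h1 : 0 ≤ d k := hd_nn k (by omega)
        have h2 : 0 ≤ d (k+2) := hd_nn (k+2) (by omega)
        have hs : k + 1 - 1 = k := rfl
        rw [hs] at h
        have : d k = 0 := by linarith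
        exact ih (by omega) (by omega) this
  intro j h1 h2
  have hnn := hd_nn j (by omega)
  have hne' := hne j h2 h1
  have : 0 < d j := lt_of_le_of_ne hnn (Ne.symm hne')
  simpa [hd_def] using this
end
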